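/- Let n ≥ 1 and let S be a left-handed skew Boolean algebra freely generated by a set of n distinct elements. Then the set of atoms of S has exactly n·2^{n−1} elements. -/

import Mathlib

universe u

/-- A skew Boolean algebra. -/
class SBA (S : Type u) where
  wedge : S → S → S
  vee : S → S → S
  diff : S → S → S
  zero : S
  wedge_assoc : ∀ x y z : S, wedge (wedge x y) z = wedge x (wedge y z)
  vee_assoc : ∀ x y z : S, vee (vee x y) z = vee x (vee y z)
  absorb1 : ∀ x y : S, wedge x (vee x y) = x
  absorb2 : ∀ x y : S, wedge (vee y x) x = x
  absorb3 : ∀ x y : S, vee x (wedge x y) = x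
  absorb4 : ∀ x y : S, vee (wedge y x) x = x
  sdistrib1 : ∀ x y z : S, wedge x (vee y z) = vee (wedge x y) (wedge x z)
  sdistrib2 : ∀ x y z : S, wedge (vee x y) z = vee (wedge x z) (wedge y z)
  zero_wedge : ∀ x : S, wedge zero x = zero
  wedge_zero : ∀ x : S, wedge x zero = zero
  zero_vee : ∀ x : S, vee zero x = x
  vee_zero : ∀ x : S, vee x zero = x
  diff_ax1 : ∀ x y : S, vee (wedge (wedge x y) x) (diff x y) = x
  diff_ax2 : ∀ x y : S, wedge (wedge (wedge x y) x) (diff x y) = zero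
  diff_ax3 : ∀ x y : S, wedge (diff x y) (wedge (wedge x y) x) = zero

namespace SBA

scoped infixl:70 " ⋏ " => SBA.wedge
scoped infixl:65 " ⋎ " => SBA.vee
scoped infixl:70 " ∖ " => SBA.diff

variable {S : Type u} [SBA S]

/-- Green's relation `D`: `x D y` iff `x⋏y⋏x = x` and `y⋏x⋏y = y`. -/
def Drel (x y : S) : Prop := x ⋏ y ⋏ x = x ∧ y ⋏ x ⋏ y = y

/-- The natural partial order: `x ≤ y` iff `x⋏y = x = y⋏x`. -/
def nle (x y : S) : Prop := x ⋏ y = x ∧ y ⋏ x = x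

/-- An atom: a nonzero element with nothing strictly between it and `0`. -/
def IsAtom (a : S) : Prop := a ≠ zero ∧ ∀ x : S, nle x a → x = zero ∨ x = a

/-- `X` generates `S`: the only subset of `S` containing `X` and `0` and closed
under the three operations is `S` itself. -/
def Generates (X : Set S) : Prop :=
  ∀ T : Set S, X ⊆ T → zero ∈ T →
    (∀ a b : S, a ∈ T → b ∈ T → a ⋏ b ∈ T ∧ a ⋎ b ∈ T ∧ a ∖ b ∈ T) →
    T = Set.univ

/-- A homomorphism of skew Boolean algebras. -/
def IsHom {T : Type u} [SBA T] (f : S → T) : Prop :=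
  (∀ a b : S, f (a ⋏ b) = f a ⋏ f b) ∧ (∀ a b : S, f (a ⋎ b) = f a ⋎ f b) ∧
    (∀ a b : S, f (a ∖ b) = f a ∖ f b) ∧ f zero = zero

end SBA

open SBA

/-- A left-handed skew Boolean algebra. -/
class LeftHanded (S : Type u) [SBA S] : Prop where
  lh_wedge : ∀ x y : S, x ⋏ y ⋏ x = x ⋏ y
  lh_vee : ∀ x y : S, x ⋎ y ⋎ x = y ⋎ x

/-- `S` is freely generated by `X` over the variety of all skew Boolean algebras. -/
def FreelyGenerates (S : Type u) [SBA S] (X : Set S) : Prop :=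
  Generates X ∧
    ∀ (T : Type u) [SBA T], ∀ g : X → T,
      ∃ f : S → T, IsHom f ∧ ∀ x : X, f x = g x

/-- `S` is freely generated by `X` over the variety of left-handed skew Boolean algebras. -/
def LFreelyGenerates (S : Type u) [SBA S] [LeftHanded S] (X : Set S) : Prop :=
  Generates X ∧
    ∀ (T : Type u) [SBA T] [LeftHanded T], ∀ g : X → T,
      ∃ f : S → T, IsHom f ∧ ∀ x : X, f x = g x

section GeneralLemmas

open SBA

variable {S : Type u} [SBA S] [LeftHanded S]

lemma wedge_idem (a : S) : a ⋏ a = a := by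
  have h1 : a ⋎ (a ⋏ a) = a := SBA.absorb3 a a
  have h2 : a ⋏ (a ⋎ (a ⋏ a)) = a := SBA.absorb1 a (a ⋏ a)
  rw [h1] at h2; exact h2

lemma vee_idem (a : S) : a ⋎ a = a := by
  have := SBA.absorb3 a a; rwa [wedge_idem] at this

lemma wedge_Dpair {m m' : S} (h1 : m ⋏ m' = m) (h2 : m' ⋏ m = m') (x : S) :
    x ⋏ m = x ⋏ m' := by
  have hv : m' ⋎ m = m := by
    have := SBA.absorb4 (x := m) (y := m'); rwa [h2] at this
  have e1 : x ⋏ m = (x ⋏ m') ⋎ (x ⋏ m) := by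
    conv_lhs => rw [← hv, SBA.sdistrib1]
  have e2 : x ⋏ m' = (x ⋏ m') ⋎ (x ⋏ m) := by
    calc x ⋏ m' = (x ⋏ (x ⋎ m)) ⋏ m' := by rw [SBA.absorb1]
    _ = x ⋏ ((x ⋎ m) ⋏ m') := by rw [SBA.wedge_assoc]
    _ = x ⋏ ((x ⋏ m') ⋎ (m ⋏ m')) := by rw [SBA.sdistrib2]
    _ = x ⋏ ((x ⋏ m') ⋎ m) := by rw [h1]
    _ = (x ⋏ (x ⋏ m')) ⋎ (x ⋏ m) := by rw [SBA.sdistrib1]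
    _ = ((x ⋏ x) ⋏ m') ⋎ (x ⋏ m) := by rw [SBA.wedge_assoc]
    _ = (x ⋏ m') ⋎ (x ⋏ m) := by rw [wedge_idem]
  rw [e1, ← e2]

lemma wedge_normal (a b c : S) : a ⋏ b ⋏ c = a ⋏ c ⋏ b := by
  have h1 : (b ⋏ c) ⋏ (c ⋏ b) = b ⋏ c := by
    calc (b ⋏ c) ⋏ (c ⋏ b) = ((b ⋏ c) ⋏ c) ⋏ b := by rw [SBA.wedge_assoc (b ⋏ c) c b]
    _ = (b ⋏ (c ⋏ c)) ⋏ b := by rw [SBA.wedge_assoc b c c]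
    _ = (b ⋏ c) ⋏ b := by rw [wedge_idem]
    _ = b ⋏ c := LeftHanded.lh_wedge b c
  have h2 : (c ⋏ b) ⋏ (b ⋏ c) = c ⋏ b := by
    calc (c ⋏ b) ⋏ (b ⋏ c) = ((c ⋏ b) ⋏ b) ⋏ c := by rw [SBA.wedge_assoc (c ⋏ b) b c]
    _ = (c ⋏ (b ⋏ b)) ⋏ c := by rw [SBA.wedge_assoc c b b]
    _ = (c ⋏ b) ⋏ c := by rw [wedge_idem]
    _ = c ⋏ b := LeftHanded.lh_wedge c b
  rw [SBA.wedge_assoc, SBA.wedge_assoc]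
  exact wedge_Dpair h1 h2 a

lemma wedge_zero_symm {a b : S} (h : a ⋏ b = SBA.zero) : b ⋏ a = SBA.zero := by
  calc b ⋏ a = b ⋏ a ⋏ b := (LeftHanded.lh_wedge b a).symm
  _ = b ⋏ (a ⋏ b) := SBA.wedge_assoc b a b
  _ = b ⋏ SBA.zero := by rw [h]
  _ = SBA.zero := SBA.wedge_zero b

lemma nle_refl (a : S) : nle a a := ⟨wedge_idem a, wedge_idem a⟩

lemma nle_trans {a b c : S} (h1 : nle a b) (h2 : nle b c) : nle a c := by
  obtain ⟨h1l, h1r⟩ := h1; obtain ⟨h2l, h2r⟩ := h2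
  constructor
  · calc a ⋏ c = (a ⋏ b) ⋏ c := by rw [h1l]
    _ = a ⋏ (b ⋏ c) := SBA.wedge_assoc a b c
    _ = a ⋏ b := by rw [h2l]
    _ = a := h1l
  · calc c ⋏ a = c ⋏ (b ⋏ a) := by rw [h1r]
    _ = (c ⋏ b) ⋏ a := (SBA.wedge_assoc c b a).symm
    _ = b ⋏ a := by rw [h2r]
    _ = a := h1r

lemma nle_zero (a : S) : nle (SBA.zero) a :=
  ⟨SBA.zero_wedge a, SBA.wedge_zero a⟩

lemma nle_wedge_comm {u v t : S} (hu : nle u t) (hv : nle v t) : u ⋏ v = v ⋏ u := by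
  calc u ⋏ v = (t ⋏ u) ⋏ v := by rw [hu.2]
  _ = t ⋏ u ⋏ v := rfl
  _ = t ⋏ v ⋏ u := wedge_normal t u v
  _ = (t ⋏ v) ⋏ u := rfl
  _ = v ⋏ u := by rw [hv.2]

/-- `a⋏b ⋎ a∖b = a`. -/
lemma diff_decomp (a b : S) : (a ⋏ b) ⋎ (a ∖ b) = a := by
  have := SBA.diff_ax1 a b
  rwa [LeftHanded.lh_wedge a b] at this

lemma wedge_diff_zero (a b : S) : (a ⋏ b) ⋏ (a ∖ b) = SBA.zero := by
  have := SBA.diff_ax2 a b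
  rwa [LeftHanded.lh_wedge a b] at this

lemma diff_wedge_zero' (a b : S) : (a ∖ b) ⋏ (a ⋏ b) = SBA.zero := by
  have := SBA.diff_ax3 a b
  rwa [LeftHanded.lh_wedge a b] at this

lemma diff_nle (a b : S) : nle (a ∖ b) a := by
  constructor
  · calc (a ∖ b) ⋏ a = (a ∖ b) ⋏ ((a ⋏ b) ⋎ (a ∖ b)) := by rw [diff_decomp]
    _ = ((a ∖ b) ⋏ (a ⋏ b)) ⋎ ((a ∖ b) ⋏ (a ∖ b)) := SBA.sdistrib1 ..
    _ = SBA.zero ⋎ (a ∖ b) := by rw [diff_wedge_zero', wedge_idem]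
    _ = a ∖ b := SBA.zero_vee _
  · calc a ⋏ (a ∖ b) = ((a ⋏ b) ⋎ (a ∖ b)) ⋏ (a ∖ b) := by rw [diff_decomp]
    _ = ((a ⋏ b) ⋏ (a ∖ b)) ⋎ ((a ∖ b) ⋏ (a ∖ b)) := SBA.sdistrib2 ..
    _ = SBA.zero ⋎ (a ∖ b) := by rw [wedge_diff_zero, wedge_idem]
    _ = a ∖ b := SBA.zero_vee _

lemma diff_wedge_self (a b : S) : (a ∖ b) ⋏ b = SBA.zero := by
  calc (a ∖ b) ⋏ b = ((a ∖ b) ⋏ a) ⋏ b := by rw [(diff_nle a b).1]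
  _ = (a ∖ b) ⋏ (a ⋏ b) := SBA.wedge_assoc ..
  _ = SBA.zero := diff_wedge_zero' a b

/-- uniqueness of complements: characterisation of `a ∖ b`. -/
lemma diff_eq_of {a b c : S} (hle : nle c a) (h1 : (a ⋏ b) ⋏ c = SBA.zero)
    (h2 : c ⋏ (a ⋏ b) = SBA.zero) (h3 : (a ⋏ b) ⋎ c = a) : c = a ∖ b := by
  have hd := diff_nle a b
  have e1 : c = c ⋏ (a ∖ b) := by
    calc c = c ⋏ a := hle.1.symm
    _ = c ⋏ ((a ⋏ b) ⋎ (a ∖ b)) := by rw [diff_decomp]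
    _ = (c ⋏ (a ⋏ b)) ⋎ (c ⋏ (a ∖ b)) := SBA.sdistrib1 ..
    _ = SBA.zero ⋎ (c ⋏ (a ∖ b)) := by rw [h2]
    _ = c ⋏ (a ∖ b) := SBA.zero_vee _
  have e2 : a ∖ b = (a ∖ b) ⋏ c := by
    calc a ∖ b = (a ∖ b) ⋏ a := (diff_nle a b).1.symm
    _ = (a ∖ b) ⋏ ((a ⋏ b) ⋎ c) := by rw [h3]
    _ = ((a ∖ b) ⋏ (a ⋏ b)) ⋎ ((a ∖ b) ⋏ c) := SBA.sdistrib1 ..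
    _ = SBA.zero ⋎ ((a ∖ b) ⋏ c) := by rw [diff_wedge_zero']
    _ = (a ∖ b) ⋏ c := SBA.zero_vee _
  rw [e1, nle_wedge_comm hle hd, ← e2]

lemma diff_zero_right (a : S) : a ∖ SBA.zero = a := by
  symm
  apply diff_eq_of (nle_refl a) <;> rw [SBA.wedge_zero]
  · exact SBA.zero_wedge a
  · exact SBA.wedge_zero a
  · exact SBA.zero_vee a

lemma diff_eq_self_of_orth {a b : S} (h : a ⋏ b = SBA.zero) : a ∖ b = a := by
  symm
  apply diff_eq_of (nle_refl a) <;> rw [h]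
  · exact SBA.zero_wedge a
  · exact SBA.wedge_zero a
  · exact SBA.zero_vee a

lemma diff_eq_zero_of_le {a b : S} (h : a ⋏ b = a) : a ∖ b = SBA.zero := by
  symm
  apply diff_eq_of (nle_zero a) <;> rw [h]
  · exact SBA.wedge_zero a
  · exact SBA.zero_wedge a
  · exact SBA.vee_zero a

lemma zero_diff (a : S) : SBA.zero ∖ a = SBA.zero :=
  diff_eq_zero_of_le (SBA.zero_wedge a)

end GeneralLemmas
section GeneralLemmas2

open SBA

variable {S : Type u} [SBA S] [LeftHanded S]

/-- orthogonal elements: both products are zero (one suffices by `wedge_zero_symm`). -/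
def Orth (a b : S) : Prop := a ⋏ b = SBA.zero

lemma Orth.symm {a b : S} (h : Orth a b) : Orth b a := wedge_zero_symm h

lemma orth_vee_comm {a b : S} (h : Orth a b) : a ⋎ b = b ⋎ a := by
  have hba : b ⋏ a = SBA.zero := h.symm
  have h1 : (a ⋎ b) ⋏ a = a := by
    calc (a ⋎ b) ⋏ a = (a ⋏ a) ⋎ (b ⋏ a) := SBA.sdistrib2 ..
    _ = a ⋎ SBA.zero := by rw [wedge_idem, hba]
    _ = a := SBA.vee_zero a
  have h2 : (a ⋎ b) ⋎ a = a ⋎ b := by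
    have := SBA.absorb3 (a ⋎ b) a; rwa [h1] at this
  calc a ⋎ b = (a ⋎ b) ⋎ a := h2.symm
  _ = b ⋎ a := LeftHanded.lh_vee a b

lemma nle_vee_left {a b : S} (h : Orth b a) : nle a (a ⋎ b) := by
  constructor
  · exact SBA.absorb1 a b
  · calc (a ⋎ b) ⋏ a = (a ⋏ a) ⋎ (b ⋏ a) := SBA.sdistrib2 ..
    _ = a ⋎ SBA.zero := by rw [wedge_idem, h]
    _ = a := SBA.vee_zero a

lemma nle_vee_right {a b : S} (h : Orth a b) : nle b (a ⋎ b) := by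
  have hba : b ⋏ a = SBA.zero := h.symm
  constructor
  · calc b ⋏ (a ⋎ b) = (b ⋏ a) ⋎ (b ⋏ b) := SBA.sdistrib1 ..
    _ = SBA.zero ⋎ b := by rw [hba, wedge_idem]
    _ = b := SBA.zero_vee b
  · calc (a ⋎ b) ⋏ b = (a ⋏ b) ⋎ (b ⋏ b) := SBA.sdistrib2 ..
    _ = SBA.zero ⋎ b := by rw [h, wedge_idem]
    _ = b := SBA.zero_vee b

lemma vee_absorb_of_nle {a b : S} (h : nle b a) : a ⋎ b = a := by
  have := SBA.absorb3 a b
  calc a ⋎ b = a ⋎ (a ⋏ b) := by rw [h.2]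
  _ = a := SBA.absorb3 a b

/-- if `d ≤ s` and `d ⋏ b = 0` then `d ≤ s∖b`. -/
lemma nle_diff {d s b : S} (hle : nle d s) (h : d ⋏ b = SBA.zero) : nle d (s ∖ b) := by
  have hds : d ⋏ (s ⋏ b) = SBA.zero := by
    calc d ⋏ (s ⋏ b) = (d ⋏ s) ⋏ b := (SBA.wedge_assoc ..).symm
    _ = d ⋏ b := by rw [hle.1]
    _ = SBA.zero := h
  constructor
  · calc d ⋏ (s ∖ b) = SBA.zero ⋎ (d ⋏ (s ∖ b)) := (SBA.zero_vee _).symm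
    _ = (d ⋏ (s ⋏ b)) ⋎ (d ⋏ (s ∖ b)) := by rw [hds]
    _ = d ⋏ ((s ⋏ b) ⋎ (s ∖ b)) := (SBA.sdistrib1 ..).symm
    _ = d ⋏ s := by rw [diff_decomp]
    _ = d := hle.1
  · have hbd : b ⋏ d = SBA.zero := wedge_zero_symm h
    have h1 : (s ⋏ b) ⋏ d = SBA.zero := by
      calc (s ⋏ b) ⋏ d = s ⋏ (b ⋏ d) := SBA.wedge_assoc ..
      _ = s ⋏ SBA.zero := by rw [hbd]
      _ = SBA.zero := SBA.wedge_zero s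
    calc (s ∖ b) ⋏ d = SBA.zero ⋎ ((s ∖ b) ⋏ d) := (SBA.zero_vee _).symm
    _ = ((s ⋏ b) ⋏ d) ⋎ ((s ∖ b) ⋏ d) := by rw [h1]
    _ = ((s ⋏ b) ⋎ (s ∖ b)) ⋏ d := (SBA.sdistrib2 ..).symm
    _ = s ⋏ d := by rw [diff_decomp]
    _ = d := hle.2

/-- `(s∖a)⋏b = (s⋏b)∖a`. -/
lemma diff_wedge_comm (s a b : S) : (s ∖ a) ⋏ b = (s ⋏ b) ∖ a := by
  have hds : (s ∖ a) ⋏ s = s ∖ a := (diff_nle s a).1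
  have hsd : s ⋏ (s ∖ a) = s ∖ a := (diff_nle s a).2
  have hcs : ((s ∖ a) ⋏ b) ⋏ s = (s ∖ a) ⋏ b := by
    calc ((s ∖ a) ⋏ b) ⋏ s = ((s ∖ a) ⋏ s) ⋏ b := wedge_normal ..
    _ = (s ∖ a) ⋏ b := by rw [hds]
  have hca : ((s ∖ a) ⋏ b) ⋏ a = SBA.zero := by
    calc ((s ∖ a) ⋏ b) ⋏ a = ((s ∖ a) ⋏ a) ⋏ b := wedge_normal ..
    _ = SBA.zero := by rw [diff_wedge_self, SBA.zero_wedge]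
  have hmain : ((s ∖ a) ⋏ b) ⋏ ((s ⋏ b) ⋏ a) = SBA.zero := by
    calc ((s ∖ a) ⋏ b) ⋏ ((s ⋏ b) ⋏ a) = ((s ∖ a) ⋏ b) ⋏ ((s ⋏ a) ⋏ b) := by
          rw [wedge_normal s b a]
    _ = ((((s ∖ a) ⋏ b) ⋏ s) ⋏ a) ⋏ b := by simp only [SBA.wedge_assoc]
    _ = (((s ∖ a) ⋏ b) ⋏ a) ⋏ b := by rw [hcs]
    _ = SBA.zero := by rw [hca, SBA.zero_wedge]
  apply diff_eq_of
  · constructor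
    · calc ((s ∖ a) ⋏ b) ⋏ (s ⋏ b) = (((s ∖ a) ⋏ b) ⋏ s) ⋏ b := (SBA.wedge_assoc ..).symm
      _ = (((s ∖ a) ⋏ b) ⋏ b) := by rw [hcs]
      _ = (s ∖ a) ⋏ (b ⋏ b) := SBA.wedge_assoc ..
      _ = (s ∖ a) ⋏ b := by rw [wedge_idem]
    · calc (s ⋏ b) ⋏ ((s ∖ a) ⋏ b) = s ⋏ ((b ⋏ (s ∖ a)) ⋏ b) := by
            rw [SBA.wedge_assoc s b ((s ∖ a) ⋏ b), SBA.wedge_assoc b (s ∖ a) b]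
      _ = s ⋏ (b ⋏ (s ∖ a)) := by rw [LeftHanded.lh_wedge b (s ∖ a)]
      _ = (s ⋏ b) ⋏ (s ∖ a) := (SBA.wedge_assoc ..).symm
      _ = (s ⋏ (s ∖ a)) ⋏ b := wedge_normal ..
      _ = (s ∖ a) ⋏ b := by rw [hsd]
  · exact wedge_zero_symm hmain
  · exact hmain
  · calc ((s ⋏ b) ⋏ a) ⋎ ((s ∖ a) ⋏ b) = ((s ⋏ a) ⋏ b) ⋎ ((s ∖ a) ⋏ b) := by
          rw [wedge_normal s b a]
    _ = ((s ⋏ a) ⋎ (s ∖ a)) ⋏ b := (SBA.sdistrib2 ..).symm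
    _ = s ⋏ b := by rw [diff_decomp]

/-- `(u⋎v)∖b = u∖b ⋎ v∖b` for orthogonal `u v`. -/
lemma vee_diff {u v b : S} (huv : Orth u v) : (u ⋎ v) ∖ b = (u ∖ b) ⋎ (v ∖ b) := by
  have hvu : v ⋏ u = SBA.zero := huv.symm
  have hu : nle (u ∖ b) u := diff_nle u b
  have hv : nle (v ∖ b) v := diff_nle v b
  have hub : (u ∖ b) ⋏ v = SBA.zero := by
    calc (u ∖ b) ⋏ v = ((u ∖ b) ⋏ u) ⋏ v := by rw [hu.1]
    _ = (u ∖ b) ⋏ (u ⋏ v) := SBA.wedge_assoc ..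
    _ = SBA.zero := by rw [huv, SBA.wedge_zero]
  have hvb : (v ∖ b) ⋏ u = SBA.zero := by
    calc (v ∖ b) ⋏ u = ((v ∖ b) ⋏ v) ⋏ u := by rw [hv.1]
    _ = (v ∖ b) ⋏ (v ⋏ u) := SBA.wedge_assoc ..
    _ = SBA.zero := by rw [hvu, SBA.wedge_zero]
  symm
  apply diff_eq_of
  · constructor
    · calc ((u ∖ b) ⋎ (v ∖ b)) ⋏ (u ⋎ v)
          = (((u ∖ b) ⋏ u) ⋎ ((u ∖ b) ⋏ v)) ⋎ (((v ∖ b) ⋏ u) ⋎ ((v ∖ b) ⋏ v)) := by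
            rw [SBA.sdistrib2, SBA.sdistrib1, SBA.sdistrib1]
      _ = (u ∖ b) ⋎ (v ∖ b) := by
            rw [hu.1, hv.1, hub, hvb, SBA.vee_zero, SBA.zero_vee]
    · calc (u ⋎ v) ⋏ ((u ∖ b) ⋎ (v ∖ b))
          = ((u ⋏ (u ∖ b)) ⋎ (u ⋏ (v ∖ b))) ⋎ ((v ⋏ (u ∖ b)) ⋎ (v ⋏ (v ∖ b))) := by
            rw [SBA.sdistrib2, SBA.sdistrib1, SBA.sdistrib1]
      _ = (u ∖ b) ⋎ (v ∖ b) := by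
            rw [hu.2, hv.2, wedge_zero_symm hub, wedge_zero_symm hvb,
              SBA.vee_zero, SBA.zero_vee]
  · have t1 : (u ⋏ b) ⋏ (u ∖ b) = SBA.zero := wedge_diff_zero u b
    have t2 : (u ⋏ b) ⋏ (v ∖ b) = SBA.zero := by
      calc (u ⋏ b) ⋏ (v ∖ b) = (u ⋏ (v ∖ b)) ⋏ b := wedge_normal ..
      _ = ((u ⋏ v) ⋏ (v ∖ b)) ⋏ b := by
            rw [SBA.wedge_assoc u v (v ∖ b), hv.2]
      _ = SBA.zero := by rw [huv, SBA.zero_wedge, SBA.zero_wedge]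
    have t3 : (v ⋏ b) ⋏ (u ∖ b) = SBA.zero := by
      calc (v ⋏ b) ⋏ (u ∖ b) = (v ⋏ (u ∖ b)) ⋏ b := wedge_normal ..
      _ = ((v ⋏ u) ⋏ (u ∖ b)) ⋏ b := by
            rw [SBA.wedge_assoc v u (u ∖ b), hu.2]
      _ = SBA.zero := by rw [hvu, SBA.zero_wedge, SBA.zero_wedge]
    have t4 : (v ⋏ b) ⋏ (v ∖ b) = SBA.zero := wedge_diff_zero v b
    calc ((u ⋎ v) ⋏ b) ⋏ ((u ∖ b) ⋎ (v ∖ b))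
        = ((u ⋏ b) ⋎ (v ⋏ b)) ⋏ ((u ∖ b) ⋎ (v ∖ b)) := by rw [SBA.sdistrib2 u v b]
    _ = (((u ⋏ b) ⋏ (u ∖ b)) ⋎ ((u ⋏ b) ⋏ (v ∖ b))) ⋎
        (((v ⋏ b) ⋏ (u ∖ b)) ⋎ ((v ⋏ b) ⋏ (v ∖ b))) := by
          rw [SBA.sdistrib2 (u ⋏ b) (v ⋏ b) ((u ∖ b) ⋎ (v ∖ b)),
            SBA.sdistrib1 (u ⋏ b) (u ∖ b) (v ∖ b), SBA.sdistrib1 (v ⋏ b) (u ∖ b) (v ∖ b)]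
    _ = SBA.zero := by rw [t1, t2, t3, t4, SBA.vee_zero, SBA.vee_zero]
  · have t1 : (u ∖ b) ⋏ (u ⋏ b) = SBA.zero := diff_wedge_zero' u b
    have t2 : (u ∖ b) ⋏ (v ⋏ b) = SBA.zero := by
      calc (u ∖ b) ⋏ (v ⋏ b) = ((u ∖ b) ⋏ v) ⋏ b := (SBA.wedge_assoc ..).symm
      _ = SBA.zero := by rw [hub, SBA.zero_wedge]
    have t3 : (v ∖ b) ⋏ (u ⋏ b) = SBA.zero := by
      calc (v ∖ b) ⋏ (u ⋏ b) = ((v ∖ b) ⋏ u) ⋏ b := (SBA.wedge_assoc ..).symm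
      _ = SBA.zero := by rw [hvb, SBA.zero_wedge]
    have t4 : (v ∖ b) ⋏ (v ⋏ b) = SBA.zero := diff_wedge_zero' v b
    calc ((u ∖ b) ⋎ (v ∖ b)) ⋏ ((u ⋎ v) ⋏ b)
        = ((u ∖ b) ⋎ (v ∖ b)) ⋏ ((u ⋏ b) ⋎ (v ⋏ b)) := by rw [SBA.sdistrib2 u v b]
    _ = (((u ∖ b) ⋏ (u ⋏ b)) ⋎ ((u ∖ b) ⋏ (v ⋏ b))) ⋎
        (((v ∖ b) ⋏ (u ⋏ b)) ⋎ ((v ∖ b) ⋏ (v ⋏ b))) := by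
          rw [SBA.sdistrib2 (u ∖ b) (v ∖ b) ((u ⋏ b) ⋎ (v ⋏ b)),
            SBA.sdistrib1 (u ∖ b) (u ⋏ b) (v ⋏ b), SBA.sdistrib1 (v ∖ b) (u ⋏ b) (v ⋏ b)]
    _ = SBA.zero := by rw [t1, t2, t3, t4, SBA.vee_zero, SBA.vee_zero]
  · have horth : Orth ((v ⋏ b)) ((u ∖ b)) := by
      show (v ⋏ b) ⋏ (u ∖ b) = SBA.zero
      calc (v ⋏ b) ⋏ (u ∖ b) = (v ⋏ (u ∖ b)) ⋏ b := wedge_normal ..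
      _ = ((v ⋏ u) ⋏ (u ∖ b)) ⋏ b := by rw [SBA.wedge_assoc v u (u ∖ b), hu.2]
      _ = SBA.zero := by rw [hvu, SBA.zero_wedge, SBA.zero_wedge]
    calc ((u ⋎ v) ⋏ b) ⋎ ((u ∖ b) ⋎ (v ∖ b))
        = ((u ⋏ b) ⋎ (v ⋏ b)) ⋎ ((u ∖ b) ⋎ (v ∖ b)) := by rw [SBA.sdistrib2]
    _ = (u ⋏ b) ⋎ (((v ⋏ b) ⋎ (u ∖ b)) ⋎ (v ∖ b)) := by
          rw [SBA.vee_assoc, SBA.vee_assoc]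
    _ = (u ⋏ b) ⋎ (((u ∖ b) ⋎ (v ⋏ b)) ⋎ (v ∖ b)) := by rw [orth_vee_comm horth]
    _ = ((u ⋏ b) ⋎ (u ∖ b)) ⋎ ((v ⋏ b) ⋎ (v ∖ b)) := by
          rw [SBA.vee_assoc, SBA.vee_assoc]
    _ = u ⋎ v := by rw [diff_decomp, diff_decomp]

/-- `s∖(a⋎b) = (s∖a)∖b`. -/
lemma diff_vee (s a b : S) : s ∖ (a ⋎ b) = (s ∖ a) ∖ b := by
  have hc_sa : nle ((s ∖ a) ∖ b) (s ∖ a) := diff_nle (s ∖ a) b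
  have hc_s : nle ((s ∖ a) ∖ b) s := nle_trans hc_sa (diff_nle s a)
  have hca : ((s ∖ a) ∖ b) ⋏ a = SBA.zero := by
    calc ((s ∖ a) ∖ b) ⋏ a = (((s ∖ a) ∖ b) ⋏ (s ∖ a)) ⋏ a := by rw [hc_sa.1]
    _ = ((s ∖ a) ∖ b) ⋏ ((s ∖ a) ⋏ a) := SBA.wedge_assoc ..
    _ = SBA.zero := by rw [diff_wedge_self, SBA.wedge_zero]
  have hcb : ((s ∖ a) ∖ b) ⋏ b = SBA.zero := diff_wedge_self (s ∖ a) b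
  have hcab : ((s ∖ a) ∖ b) ⋏ (s ⋏ (a ⋎ b)) = SBA.zero := by
    calc ((s ∖ a) ∖ b) ⋏ (s ⋏ (a ⋎ b)) = (((s ∖ a) ∖ b) ⋏ s) ⋏ (a ⋎ b) :=
          (SBA.wedge_assoc ..).symm
    _ = ((s ∖ a) ∖ b) ⋏ (a ⋎ b) := by rw [hc_s.1]
    _ = (((s ∖ a) ∖ b) ⋏ a) ⋎ (((s ∖ a) ∖ b) ⋏ b) := SBA.sdistrib1 ..
    _ = SBA.zero := by rw [hca, hcb, SBA.vee_zero]
  symm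
  apply diff_eq_of hc_s (wedge_zero_symm hcab) hcab
  -- join condition: (s ⋏ (a⋎b)) ⋎ ((s∖a)∖b) = s
  have hnle : nle ((s ⋏ b) ⋏ a) (s ⋏ a) := by
    have hu_s : ((s ⋏ b) ⋏ a) ⋏ s = (s ⋏ b) ⋏ a := by
      calc ((s ⋏ b) ⋏ a) ⋏ s = (s ⋏ (b ⋏ a)) ⋏ s := by rw [SBA.wedge_assoc s b a]
      _ = s ⋏ (b ⋏ a) := LeftHanded.lh_wedge s (b ⋏ a)
      _ = (s ⋏ b) ⋏ a := (SBA.wedge_assoc s b a).symm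
    constructor
    · calc ((s ⋏ b) ⋏ a) ⋏ (s ⋏ a) = (((s ⋏ b) ⋏ a) ⋏ s) ⋏ a := (SBA.wedge_assoc ..).symm
      _ = ((s ⋏ b) ⋏ a) ⋏ a := by rw [hu_s]
      _ = (s ⋏ b) ⋏ (a ⋏ a) := SBA.wedge_assoc ..
      _ = (s ⋏ b) ⋏ a := by rw [wedge_idem]
    · calc (s ⋏ a) ⋏ ((s ⋏ b) ⋏ a) = ((s ⋏ a) ⋏ (s ⋏ b)) ⋏ a := (SBA.wedge_assoc ..).symm
      _ = (((s ⋏ a) ⋏ s) ⋏ b) ⋏ a := by rw [SBA.wedge_assoc (s ⋏ a) s b]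
      _ = ((s ⋏ a) ⋏ b) ⋏ a := by rw [LeftHanded.lh_wedge s a]
      _ = ((s ⋏ b) ⋏ a) ⋏ a := by rw [wedge_normal s a b]
      _ = (s ⋏ b) ⋏ (a ⋏ a) := SBA.wedge_assoc ..
      _ = (s ⋏ b) ⋏ a := by rw [wedge_idem]
  have hsb : s ⋏ b = ((s ⋏ b) ⋏ a) ⋎ ((s ∖ a) ⋏ b) := by
    have := diff_decomp (s ⋏ b) a
    rw [← diff_wedge_comm] at this
    exact this.symm
  calc (s ⋏ (a ⋎ b)) ⋎ ((s ∖ a) ∖ b) = ((s ⋏ a) ⋎ (s ⋏ b)) ⋎ ((s ∖ a) ∖ b) := by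
        rw [SBA.sdistrib1]
  _ = ((s ⋏ a) ⋎ (((s ⋏ b) ⋏ a) ⋎ ((s ∖ a) ⋏ b))) ⋎ ((s ∖ a) ∖ b) := by rw [← hsb]
  _ = (((s ⋏ a) ⋎ ((s ⋏ b) ⋏ a)) ⋎ ((s ∖ a) ⋏ b)) ⋎ ((s ∖ a) ∖ b) := by
        simp only [SBA.vee_assoc]
  _ = ((s ⋏ a) ⋎ ((s ∖ a) ⋏ b)) ⋎ ((s ∖ a) ∖ b) := by rw [vee_absorb_of_nle hnle]
  _ = (s ⋏ a) ⋎ (((s ∖ a) ⋏ b) ⋎ ((s ∖ a) ∖ b)) := SBA.vee_assoc ..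
  _ = (s ⋏ a) ⋎ (s ∖ a) := by rw [diff_decomp]
  _ = s := diff_decomp s a

/-- `(s∖a)∖b = (s∖b)∖a`. -/
lemma diff_diff_comm (s a b : S) : (s ∖ a) ∖ b = (s ∖ b) ∖ a := by
  have hc_sa : nle ((s ∖ a) ∖ b) (s ∖ a) := diff_nle (s ∖ a) b
  have hc_s : nle ((s ∖ a) ∖ b) s := nle_trans hc_sa (diff_nle s a)
  have hca : ((s ∖ a) ∖ b) ⋏ a = SBA.zero := by
    calc ((s ∖ a) ∖ b) ⋏ a = (((s ∖ a) ∖ b) ⋏ (s ∖ a)) ⋏ a := by rw [hc_sa.1]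
    _ = ((s ∖ a) ∖ b) ⋏ ((s ∖ a) ⋏ a) := SBA.wedge_assoc ..
    _ = SBA.zero := by rw [diff_wedge_self, SBA.wedge_zero]
  have hcb : ((s ∖ a) ∖ b) ⋏ b = SBA.zero := diff_wedge_self (s ∖ a) b
  have hle' : nle ((s ∖ a) ∖ b) (s ∖ b) := nle_diff hc_s hcb
  have hmain : ((s ∖ a) ∖ b) ⋏ ((s ∖ b) ⋏ a) = SBA.zero := by
    calc ((s ∖ a) ∖ b) ⋏ ((s ∖ b) ⋏ a) = (((s ∖ a) ∖ b) ⋏ (s ∖ b)) ⋏ a :=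
          (SBA.wedge_assoc ..).symm
    _ = ((s ∖ a) ∖ b) ⋏ a := by rw [hle'.1]
    _ = SBA.zero := hca
  apply diff_eq_of hle' (wedge_zero_symm hmain) hmain
  -- join : ((s∖b)⋏a) ⋎ ((s∖a)∖b) = s∖b
  have horth : Orth (s ⋏ a) (s ∖ a) := wedge_diff_zero s a
  calc ((s ∖ b) ⋏ a) ⋎ ((s ∖ a) ∖ b) = ((s ⋏ a) ∖ b) ⋎ ((s ∖ a) ∖ b) := by
        rw [diff_wedge_comm]
  _ = ((s ⋏ a) ⋎ (s ∖ a)) ∖ b := (vee_diff horth).symm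
  _ = s ∖ b := by rw [diff_decomp]

end GeneralLemmas2
section BigJoin

open SBA

variable {S : Type u} [SBA S] [LeftHanded S]

def bigjoin : List S → S := fun l => l.foldr (· ⋎ ·) SBA.zero

@[simp] lemma bigjoin_nil : bigjoin ([] : List S) = SBA.zero := rfl

@[simp] lemma bigjoin_cons (a : S) (l : List S) : bigjoin (a :: l) = a ⋎ bigjoin l := rfl

lemma bigjoin_append (l₁ l₂ : List S) :
    bigjoin (l₁ ++ l₂) = bigjoin l₁ ⋎ bigjoin l₂ := by
  induction l₁ with
  | nil => simp [SBA.zero_vee]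
  | cons a l ih => simp [ih, SBA.vee_assoc]

lemma wedge_bigjoin (a : S) (l : List S) :
    a ⋏ bigjoin l = bigjoin (l.map (a ⋏ ·)) := by
  induction l with
  | nil => simpa using SBA.wedge_zero a
  | cons b l ih => simp [SBA.sdistrib1, ih]

lemma bigjoin_wedge (l : List S) (a : S) :
    bigjoin l ⋏ a = bigjoin (l.map (· ⋏ a)) := by
  induction l with
  | nil => simpa using SBA.zero_wedge a
  | cons b l ih => simp [SBA.sdistrib2, ih]

lemma bigjoin_eq_zero {l : List S} (h : ∀ u ∈ l, u = SBA.zero) :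
    bigjoin l = SBA.zero := by
  induction l with
  | nil => rfl
  | cons b l ih =>
    simp only [bigjoin_cons, h b (by simp)]
    rw [SBA.zero_vee]
    exact ih fun u hu => h u (by simp [hu])

lemma orth_bigjoin_right {a : S} {l : List S} (h : ∀ u ∈ l, a ⋏ u = SBA.zero) :
    a ⋏ bigjoin l = SBA.zero := by
  rw [wedge_bigjoin]
  exact bigjoin_eq_zero (by simpa using h)

lemma orth_bigjoin_left {a : S} {l : List S} (h : ∀ u ∈ l, u ⋏ a = SBA.zero) :
    bigjoin l ⋏ a = SBA.zero := by
  rw [bigjoin_wedge]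
  exact bigjoin_eq_zero (by simpa using h)

/-- bigjoin is invariant under permutations of pairwise ⋎-commuting lists. -/
lemma bigjoin_perm {l l' : List S} (h : l.Perm l')
    (hp : l.Pairwise (fun u v : S => u ⋎ v = v ⋎ u)) :
    bigjoin l = bigjoin l' := by
  have hsymm : Symmetric (fun u v : S => u ⋎ v = v ⋎ u) := fun u v h => h.symm
  induction h with
  | nil => rfl
  | cons a h ih =>
    rw [List.pairwise_cons] at hp
    simp [ih hp.2]
  | swap a b l =>
    rw [List.pairwise_cons] at hp
    have hab : b ⋎ a = a ⋎ b := hp.1 a (by simp)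
    simp only [bigjoin_cons]
    rw [← SBA.vee_assoc, ← SBA.vee_assoc, hab]
  | trans h₁ h₂ ih₁ ih₂ =>
    rw [ih₁ hp, ih₂ ((List.Perm.pairwise_iff (fun {u v} (h : u ⋎ v = v ⋎ u) => h.symm) h₁).mp hp)]

variable {ι : Type*} [DecidableEq ι]

/-- a bigjoin over an index list of an orthogonal family is unchanged when
passing to a larger index list, provided the new values are zero. -/
lemma bigjoin_map_eq_of (φ : ι → S) {L1 L2 : List ι} (h1 : L1.Nodup) (h2 : L2.Nodup)
    (horth : ∀ a b, a ≠ b → Orth (φ a) (φ b))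
    (hsub : ∀ a ∈ L1, a ∈ L2) (hzero : ∀ a ∈ L2, a ∉ L1 → φ a = SBA.zero) :
    bigjoin (L1.map φ) = bigjoin (L2.map φ) := by
  induction L2 generalizing L1 h1 with
  | nil =>
    have : L1 = [] := by
      cases L1 with
      | nil => rfl
      | cons a l => exact absurd (hsub a (by simp)) (by simp)
    simp [this]
  | cons b L2' ih =>
    have hnd2' : L2'.Nodup := (List.nodup_cons.mp h2).2
    have hbL2' : b ∉ L2' := (List.nodup_cons.mp h2).1
    by_cases hb : b ∈ L1
    · have hperm : L1.Perm (b :: L1.erase b) := List.perm_cons_erase hb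
      have hpw : L1.Pairwise (fun u v : ι => φ u ⋎ φ v = φ v ⋎ φ u) :=
        List.Pairwise.imp (fun {u v} hne => orth_vee_comm (horth u v hne))
          (List.Pairwise.imp (fun h => h) h1)
      have hpw' : (L1.map φ).Pairwise (fun u v : S => u ⋎ v = v ⋎ u) :=
        List.pairwise_map.mpr hpw
      have : bigjoin (L1.map φ) = bigjoin ((b :: L1.erase b).map φ) :=
        bigjoin_perm (hperm.map φ) hpw'
      rw [this]
      simp only [List.map_cons, bigjoin_cons]
      congr 1
      apply ih (h1.erase b) hnd2'
      · intro a ha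
        have hane : a ≠ b := (List.Nodup.mem_erase_iff h1).mp ha |>.1
        have : a ∈ b :: L2' := hsub a (List.mem_of_mem_erase ha)
        simpa [hane] using this
      · intro a ha hna
        have hane : a ≠ b := fun h => hbL2' (h ▸ ha)
        apply hzero a (by simp [ha])
        intro haL1
        exact hna ((List.Nodup.mem_erase_iff h1).mpr ⟨hane, haL1⟩)
    · have hz : φ b = SBA.zero := hzero b (by simp) hb
      simp only [List.map_cons, bigjoin_cons, hz, SBA.zero_vee]
      apply ih h1 hnd2'
      · intro a ha
        have : a ∈ b :: L2' := hsub a ha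
        have hane : a ≠ b := fun h => hb (h ▸ ha)
        simpa [hane] using this
      · intro a ha hna
        exact hzero a (by simp [ha]) hna

lemma bigjoin_map_wedge (L : List ι) (hnd : L.Nodup) (φ ψ : ι → S)
    (hcross : ∀ a b, a ≠ b → φ a ⋏ ψ b = SBA.zero) :
    bigjoin (L.map φ) ⋏ bigjoin (L.map ψ) = bigjoin (L.map fun a => φ a ⋏ ψ a) := by
  induction L with
  | nil => simpa using SBA.wedge_zero _
  | cons a L' ih =>
    have hnd' : L'.Nodup := (List.nodup_cons.mp hnd).2
    have haL' : a ∉ L' := (List.nodup_cons.mp hnd).1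
    simp only [List.map_cons, bigjoin_cons]
    have h1 : φ a ⋏ bigjoin (L'.map ψ) = SBA.zero := by
      apply orth_bigjoin_right
      intro u hu
      obtain ⟨b, hb, rfl⟩ := List.mem_map.mp hu
      exact hcross a b (fun h => haL' (h ▸ hb))
    have h2 : bigjoin (L'.map φ) ⋏ ψ a = SBA.zero := by
      apply orth_bigjoin_left
      intro u hu
      obtain ⟨b, hb, rfl⟩ := List.mem_map.mp hu
      exact hcross b a (fun h => haL' (h ▸ hb))
    calc (φ a ⋎ bigjoin (L'.map φ)) ⋏ (ψ a ⋎ bigjoin (L'.map ψ))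
        = (φ a ⋏ (ψ a ⋎ bigjoin (L'.map ψ))) ⋎
          (bigjoin (L'.map φ) ⋏ (ψ a ⋎ bigjoin (L'.map ψ))) := SBA.sdistrib2 ..
    _ = ((φ a ⋏ ψ a) ⋎ (φ a ⋏ bigjoin (L'.map ψ))) ⋎
        ((bigjoin (L'.map φ) ⋏ ψ a) ⋎ (bigjoin (L'.map φ) ⋏ bigjoin (L'.map ψ))) := by
          rw [SBA.sdistrib1, SBA.sdistrib1]
    _ = (φ a ⋏ ψ a) ⋎ (bigjoin (L'.map φ) ⋏ bigjoin (L'.map ψ)) := by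
          rw [h1, h2, SBA.vee_zero, SBA.zero_vee]
    _ = (φ a ⋏ ψ a) ⋎ bigjoin (L'.map fun a => φ a ⋏ ψ a) := by rw [ih hnd']

lemma bigjoin_map_vee (L : List ι) (hnd : L.Nodup) (φ ψ : ι → S)
    (hcross : ∀ a b, a ≠ b → ψ a ⋏ φ b = SBA.zero) :
    bigjoin (L.map φ) ⋎ bigjoin (L.map ψ) = bigjoin (L.map fun a => φ a ⋎ ψ a) := by
  induction L with
  | nil => simpa using SBA.vee_zero _
  | cons a L' ih =>
    have hnd' : L'.Nodup := (List.nodup_cons.mp hnd).2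
    have haL' : a ∉ L' := (List.nodup_cons.mp hnd).1
    simp only [List.map_cons, bigjoin_cons]
    have h1 : Orth (ψ a) (bigjoin (L'.map φ)) := by
      apply orth_bigjoin_right
      intro u hu
      obtain ⟨b, hb, rfl⟩ := List.mem_map.mp hu
      exact hcross a b (fun h => haL' (h ▸ hb))
    calc (φ a ⋎ bigjoin (L'.map φ)) ⋎ (ψ a ⋎ bigjoin (L'.map ψ))
        = φ a ⋎ ((bigjoin (L'.map φ) ⋎ ψ a) ⋎ bigjoin (L'.map ψ)) := by
          simp only [SBA.vee_assoc]
    _ = φ a ⋎ ((ψ a ⋎ bigjoin (L'.map φ)) ⋎ bigjoin (L'.map ψ)) := by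
          rw [orth_vee_comm h1.symm]
    _ = (φ a ⋎ ψ a) ⋎ (bigjoin (L'.map φ) ⋎ bigjoin (L'.map ψ)) := by
          simp only [SBA.vee_assoc]
    _ = (φ a ⋎ ψ a) ⋎ bigjoin (L'.map fun a => φ a ⋎ ψ a) := by rw [ih hnd']

lemma bigjoin_map_diff (L : List ι) (hnd : L.Nodup) (φ ψ : ι → S)
    (hcross : ∀ a b, a ≠ b → (φ a ⋏ φ b = SBA.zero) ∧ (φ a ⋏ ψ b = SBA.zero)) :
    bigjoin (L.map φ) ∖ bigjoin (L.map ψ) = bigjoin (L.map fun a => φ a ∖ ψ a) := by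
  induction L with
  | nil => simpa using zero_diff _
  | cons a L' ih =>
    have hnd' : L'.Nodup := (List.nodup_cons.mp hnd).2
    have haL' : a ∉ L' := (List.nodup_cons.mp hnd).1
    simp only [List.map_cons, bigjoin_cons]
    have hU : Orth (φ a) (bigjoin (L'.map φ)) := by
      apply orth_bigjoin_right
      intro u hu
      obtain ⟨b, hb, rfl⟩ := List.mem_map.mp hu
      exact (hcross a b (fun h => haL' (h ▸ hb))).1
    have hUa : bigjoin (L'.map φ) ⋏ ψ a = SBA.zero := by
      apply orth_bigjoin_left
      intro u hu
      obtain ⟨b, hb, rfl⟩ := List.mem_map.mp hu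
      exact (hcross b a (fun h => haL' (h ▸ hb))).2
    have hda : nle (φ a ∖ ψ a) (φ a) := diff_nle ..
    have hdU : Orth (φ a ∖ ψ a) (bigjoin (L'.map φ)) := by
      show _ = _
      calc (φ a ∖ ψ a) ⋏ bigjoin (L'.map φ)
          = ((φ a ∖ ψ a) ⋏ φ a) ⋏ bigjoin (L'.map φ) := by rw [hda.1]
      _ = (φ a ∖ ψ a) ⋏ (φ a ⋏ bigjoin (L'.map φ)) := SBA.wedge_assoc ..
      _ = SBA.zero := by rw [hU, SBA.wedge_zero]
    have hdV : (φ a ∖ ψ a) ⋏ bigjoin (L'.map ψ) = SBA.zero := by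
      apply orth_bigjoin_right
      intro u hu
      obtain ⟨b, hb, rfl⟩ := List.mem_map.mp hu
      have hab : a ≠ b := fun h => haL' (h ▸ hb)
      calc (φ a ∖ ψ a) ⋏ ψ b = ((φ a ∖ ψ a) ⋏ φ a) ⋏ ψ b := by rw [hda.1]
      _ = (φ a ∖ ψ a) ⋏ (φ a ⋏ ψ b) := SBA.wedge_assoc ..
      _ = SBA.zero := by rw [(hcross a b hab).2, SBA.wedge_zero]
    calc (φ a ⋎ bigjoin (L'.map φ)) ∖ (ψ a ⋎ bigjoin (L'.map ψ))
        = ((φ a ⋎ bigjoin (L'.map φ)) ∖ ψ a) ∖ bigjoin (L'.map ψ) := diff_vee ..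
    _ = ((φ a ∖ ψ a) ⋎ (bigjoin (L'.map φ) ∖ ψ a)) ∖ bigjoin (L'.map ψ) := by
          rw [vee_diff hU]
    _ = ((φ a ∖ ψ a) ⋎ bigjoin (L'.map φ)) ∖ bigjoin (L'.map ψ) := by
          rw [diff_eq_self_of_orth hUa]
    _ = ((φ a ∖ ψ a) ∖ bigjoin (L'.map ψ)) ⋎
        (bigjoin (L'.map φ) ∖ bigjoin (L'.map ψ)) := vee_diff hdU
    _ = (φ a ∖ ψ a) ⋎ (bigjoin (L'.map φ) ∖ bigjoin (L'.map ψ)) := by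
          rw [diff_eq_self_of_orth hdV]
    _ = (φ a ∖ ψ a) ⋎ bigjoin (L'.map fun a => φ a ∖ ψ a) := by rw [ih hnd']

end BigJoin
section ECalc

open SBA

variable {S : Type u} [SBA S] [LeftHanded S] {n : ℕ}

variable (x : Fin n → S)

def lwedge (s : S) (l : List (Fin n)) : S := l.foldl (fun t j => t ⋏ x j) s

def ldiff (s : S) (l : List (Fin n)) : S := l.foldl (fun t j => t ∖ x j) s

def wA (A : Finset (Fin n)) (i : Fin n) : S := lwedge x (x i) (A.sort (· ≤ ·))

def eA (A : Finset (Fin n)) (i : Fin n) : S := ldiff x (wA x A i) (Aᶜ.sort (· ≤ ·))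

@[simp] lemma lwedge_nil (s : S) : lwedge x s [] = s := rfl
@[simp] lemma lwedge_cons (s : S) (j : Fin n) (l : List (Fin n)) :
    lwedge x s (j :: l) = lwedge x (s ⋏ x j) l := rfl
@[simp] lemma ldiff_nil (s : S) : ldiff x s [] = s := rfl
@[simp] lemma ldiff_cons (s : S) (j : Fin n) (l : List (Fin n)) :
    ldiff x s (j :: l) = ldiff x (s ∖ x j) l := rfl

lemma wedge_lwedge (t s : S) (l : List (Fin n)) :
    t ⋏ lwedge x s l = lwedge x (t ⋏ s) l := by
  induction l generalizing s with
  | nil => rfl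
  | cons j l ih => simp [ih, SBA.wedge_assoc]

lemma lwedge_wedge_absorb {s : S} {k : Fin n} (h : s ⋏ x k = s) (l : List (Fin n)) :
    lwedge x s l ⋏ x k = lwedge x s l := by
  induction l generalizing s with
  | nil => exact h
  | cons j l ih =>
    simp only [lwedge_cons]
    apply ih
    calc (s ⋏ x j) ⋏ x k = (s ⋏ x k) ⋏ x j := wedge_normal ..
    _ = s ⋏ x j := by rw [h]

lemma lwedge_wedge_of_mem {k : Fin n} {l : List (Fin n)} (h : k ∈ l) (s : S) :
    lwedge x s l ⋏ x k = lwedge x s l := by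
  induction l generalizing s with
  | nil => simp at h
  | cons j l ih =>
    rcases List.mem_cons.mp h with h' | h'
    · subst h'
      simp only [lwedge_cons]
      apply lwedge_wedge_absorb
      rw [SBA.wedge_assoc, wedge_idem]
    · exact ih h' _

lemma lwedge_absorb {s : S} {l : List (Fin n)} (h : ∀ k ∈ l, s ⋏ x k = s) :
    lwedge x s l = s := by
  induction l with
  | nil => rfl
  | cons j l ih =>
    simp only [lwedge_cons, h j (by simp)]
    exact ih fun k hk => h k (by simp [hk])

lemma ldiff_nle (s : S) (l : List (Fin n)) : nle (ldiff x s l) s := by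
  induction l generalizing s with
  | nil => exact nle_refl s
  | cons j l ih =>
    exact nle_trans (ih (s ∖ x j)) (diff_nle s (x j))

lemma ldiff_wedge_zero_of_mem {k : Fin n} {l : List (Fin n)} (h : k ∈ l) (s : S) :
    ldiff x s l ⋏ x k = SBA.zero := by
  induction l generalizing s with
  | nil => simp at h
  | cons j l ih =>
    rcases List.mem_cons.mp h with h' | h'
    · subst h'
      simp only [ldiff_cons]
      have hle := ldiff_nle x (s ∖ x k) l
      calc ldiff x (s ∖ x k) l ⋏ x k
          = (ldiff x (s ∖ x k) l ⋏ (s ∖ x k)) ⋏ x k := by rw [hle.1]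
      _ = ldiff x (s ∖ x k) l ⋏ ((s ∖ x k) ⋏ x k) := SBA.wedge_assoc ..
      _ = SBA.zero := by rw [diff_wedge_self, SBA.wedge_zero]
    · exact ih h' _

/-- one-step preservation of the left-D relation by diff. -/
lemma Dpair_diff {u u' : S} (h1 : u ⋏ u' = u) (a : S) :
    (u ∖ a) ⋏ (u' ∖ a) = u ∖ a := by
  have hdu' : (u ∖ a) ⋏ u' = u ∖ a := by
    calc (u ∖ a) ⋏ u' = ((u ∖ a) ⋏ u) ⋏ u' := by rw [(diff_nle u a).1]
    _ = (u ∖ a) ⋏ (u ⋏ u') := SBA.wedge_assoc ..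
    _ = u ∖ a := by rw [h1, (diff_nle u a).1]
  have key : u ∖ a = (u ∖ a) ⋏ (u' ∖ a) := by
    calc u ∖ a = (u ∖ a) ⋏ u' := hdu'.symm
    _ = (u ∖ a) ⋏ ((u' ⋏ a) ⋎ (u' ∖ a)) := by rw [diff_decomp]
    _ = ((u ∖ a) ⋏ (u' ⋏ a)) ⋎ ((u ∖ a) ⋏ (u' ∖ a)) := SBA.sdistrib1 ..
    _ = (((u ∖ a) ⋏ u') ⋏ a) ⋎ ((u ∖ a) ⋏ (u' ∖ a)) := by
          rw [SBA.wedge_assoc (u ∖ a) u' a]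
    _ = ((u ∖ a) ⋏ a) ⋎ ((u ∖ a) ⋏ (u' ∖ a)) := by rw [hdu']
    _ = (u ∖ a) ⋏ (u' ∖ a) := by rw [diff_wedge_self, SBA.zero_vee]
  exact key.symm

lemma Dpair_ldiff {u u' : S} (h1 : u ⋏ u' = u) (l : List (Fin n)) :
    ldiff x u l ⋏ ldiff x u' l = ldiff x u l := by
  induction l generalizing u u' with
  | nil => exact h1
  | cons j l ih =>
    simp only [ldiff_cons]
    exact ih (Dpair_diff h1 (x j))

lemma lwedge_perm {l l' : List (Fin n)} (h : l.Perm l') (s : S) :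
    lwedge x s l = lwedge x s l' :=
  h.foldl_eq' (fun j _ k _ t => wedge_normal t (x j) (x k)) s

lemma ldiff_perm {l l' : List (Fin n)} (h : l.Perm l') (s : S) :
    ldiff x s l = ldiff x s l' :=
  h.foldl_eq' (fun j _ k _ t => diff_diff_comm t (x j) (x k)) s

lemma diff_lwedge (s : S) (l : List (Fin n)) (a : S) :
    (lwedge x s l) ∖ a = lwedge x (s ∖ a) l := by
  induction l generalizing s with
  | nil => rfl
  | cons j l ih =>
    simp only [lwedge_cons]
    rw [ih, diff_wedge_comm]

/-- `wA A i ⋏ x k = wA A i` when `k ∈ A` or `k = i`. -/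
lemma wA_wedge {A : Finset (Fin n)} {i k : Fin n} (h : k ∈ A ∨ k = i) :
    wA x A i ⋏ x k = wA x A i := by
  rcases h with h | h
  · exact lwedge_wedge_of_mem x ((Finset.mem_sort _).mpr h) _
  · subst h
    exact lwedge_wedge_absorb x (wedge_idem (x k)) _

lemma eA_nle_wA (A : Finset (Fin n)) (i : Fin n) : nle (eA x A i) (wA x A i) :=
  ldiff_nle x _ _

lemma eA_wedge_x_of_mem {A : Finset (Fin n)} {i k : Fin n} (h : k ∈ A ∨ k = i) :
    eA x A i ⋏ x k = eA x A i := by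
  have hle := eA_nle_wA x A i
  calc eA x A i ⋏ x k = (eA x A i ⋏ wA x A i) ⋏ x k := by rw [hle.1]
  _ = eA x A i ⋏ (wA x A i ⋏ x k) := SBA.wedge_assoc ..
  _ = eA x A i := by rw [wA_wedge x h, hle.1]

lemma eA_wedge_x_of_not_mem {A : Finset (Fin n)} {i k : Fin n} (h : k ∉ A) :
    eA x A i ⋏ x k = SBA.zero :=
  ldiff_wedge_zero_of_mem x ((Finset.mem_sort _).mpr (Finset.mem_compl.mpr h)) _

lemma eA_wedge_eA_of_ne {A B : Finset (Fin n)} (hAB : A ≠ B) (i j : Fin n) :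
    eA x A i ⋏ eA x B j = SBA.zero := by
  have : ∃ k, (k ∈ A ∧ k ∉ B) ∨ (k ∈ B ∧ k ∉ A) := by
    by_contra hc
    push_neg at hc
    apply hAB
    ext k
    have := hc k
    tauto
  obtain ⟨k, hk | hk⟩ := this
  · -- k ∈ A, k ∉ B : e_B ⋏ x k = 0
    have h1 : eA x B j ⋏ x k = SBA.zero := eA_wedge_x_of_not_mem x hk.2
    have h2 : x k ⋏ eA x B j = SBA.zero := wedge_zero_symm h1
    calc eA x A i ⋏ eA x B j = (eA x A i ⋏ x k) ⋏ eA x B j := by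
          rw [eA_wedge_x_of_mem x (Or.inl hk.1)]
    _ = eA x A i ⋏ (x k ⋏ eA x B j) := SBA.wedge_assoc ..
    _ = SBA.zero := by rw [h2, SBA.wedge_zero]
  · have h1 : eA x A i ⋏ x k = SBA.zero := eA_wedge_x_of_not_mem x hk.2
    calc eA x A i ⋏ eA x B j = eA x A i ⋏ (eA x B j ⋏ x k) := by
          rw [eA_wedge_x_of_mem x (Or.inl hk.1)]
    _ = (eA x A i ⋏ eA x B j) ⋏ x k := (SBA.wedge_assoc ..).symm
    _ = (eA x A i ⋏ x k) ⋏ eA x B j := wedge_normal ..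
    _ = SBA.zero := by rw [h1, SBA.zero_wedge]

lemma wA_wedge_wA {A : Finset (Fin n)} {i j : Fin n} (hj : j ∈ A ∨ j = i) :
    wA x A i ⋏ wA x A j = wA x A i := by
  show wA x A i ⋏ lwedge x (x j) (A.sort (· ≤ ·)) = wA x A i
  rw [wedge_lwedge]
  rw [show wA x A i ⋏ x j = wA x A i from wA_wedge x hj]
  exact lwedge_absorb x fun k hk => wA_wedge x (Or.inl ((Finset.mem_sort _).mp hk))

lemma eA_wedge_eA_same {A : Finset (Fin n)} {i j : Fin n} (hj : j ∈ A ∨ j = i) :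
    eA x A i ⋏ eA x A j = eA x A i :=
  Dpair_ldiff x (wA_wedge_wA x hj) _

lemma eA_vee_eA_same {A : Finset (Fin n)} {i j : Fin n} (hj : j ∈ A ∨ j = i)
    (hi : i ∈ A ∨ i = j) : eA x A i ⋎ eA x A j = eA x A j := by
  have h1 : eA x A i ⋏ eA x A j = eA x A i := eA_wedge_eA_same x hj
  have := SBA.absorb4 (x := eA x A j) (y := eA x A i)
  rwa [h1] at this

lemma eA_diff_eA_same {A : Finset (Fin n)} {i j : Fin n} (hj : j ∈ A ∨ j = i) :
    eA x A i ∖ eA x A j = SBA.zero :=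
  diff_eq_zero_of_le (eA_wedge_eA_same x hj)

lemma eA_diff_eA_of_ne {A B : Finset (Fin n)} (hAB : A ≠ B) (i j : Fin n) :
    eA x A i ∖ eA x B j = eA x A i :=
  diff_eq_self_of_orth (eA_wedge_eA_of_ne x hAB i j)

end ECalc
section Split

open SBA

variable {S : Type u} [SBA S] [LeftHanded S] {n : ℕ}

variable (x : Fin n → S)

/-- all sublists of `l`. -/
def subl : List (Fin n) → List (List (Fin n))
  | [] => [[]]
  | k :: l => subl l ++ (subl l).map (k :: ·)

lemma sublist_of_mem_subl {l : List (Fin n)} {m : List (Fin n)} (h : m ∈ subl l) :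
    m.Sublist l := by
  induction l generalizing m with
  | nil => simp [subl] at h; simp [h]
  | cons k l ih =>
    simp only [subl, List.mem_append, List.mem_map] at h
    rcases h with h | ⟨m', hm', rfl⟩
    · exact (ih h).cons k
    · exact (ih hm').cons₂ k

lemma mem_subl_of_sublist {l m : List (Fin n)} (h : m.Sublist l) : m ∈ subl l := by
  induction l generalizing m with
  | nil => simp [List.sublist_nil.mp h, subl]
  | cons k l ih =>
    simp only [subl, List.mem_append, List.mem_map]
    rcases List.sublist_cons_iff.mp h with h' | ⟨m', rfl, hm'⟩
    · exact Or.inl (ih h')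
    · exact Or.inr ⟨m', ih hm', rfl⟩

lemma not_mem_of_mem_subl {l m : List (Fin n)} {k : Fin n} (h : m ∈ subl l)
    (hk : k ∉ l) : k ∉ m :=
  fun hkm => hk ((sublist_of_mem_subl h).subset hkm)

/-- sublists of a nodup list are determined by their element sets. -/
lemma sublist_eq_of_mem_iff {l m m' : List (Fin n)} (hl : l.Nodup)
    (hm : m.Sublist l) (hm' : m'.Sublist l) (h : ∀ a, a ∈ m ↔ a ∈ m') : m = m' := by
  induction l generalizing m m' with
  | nil => rw [List.sublist_nil.mp hm, List.sublist_nil.mp hm']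
  | cons k l ih =>
    have hkl : k ∉ l := (List.nodup_cons.mp hl).1
    have hln : l.Nodup := (List.nodup_cons.mp hl).2
    rcases List.sublist_cons_iff.mp hm with h1 | ⟨m₀, rfl, h1⟩ <;>
      rcases List.sublist_cons_iff.mp hm' with h2 | ⟨m₀', rfl, h2⟩
    · exact ih hln h1 h2 h
    · exact absurd (h1.subset ((h k).mpr (by simp))) hkl
    · exact absurd (h2.subset ((h k).mp (by simp))) hkl
    · have : m₀ = m₀' := by
        apply ih hln h1 h2
        intro a
        by_cases hak : a = k
        · subst hak
          constructor <;> intro hmem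
          · exact absurd (h1.subset hmem) hkl
          · exact absurd (h2.subset hmem) hkl
        · have := h a
          simp only [List.mem_cons, hak, false_or] at this
          exact this
      rw [this]

lemma subl_nodup {l : List (Fin n)} (hl : l.Nodup) : (subl l).Nodup := by
  induction l with
  | nil => simp [subl]
  | cons k l ih =>
    have hkl : k ∉ l := (List.nodup_cons.mp hl).1
    have hln : l.Nodup := (List.nodup_cons.mp hl).2
    simp only [subl]
    apply List.Nodup.append (ih hln) ((ih hln).map (fun a b => by simp))
    intro m hm1 hm2
    simp only [List.mem_map] at hm2
    obtain ⟨m', _, rfl⟩ := hm2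
    exact not_mem_of_mem_subl hm1 hkl (by simp)

lemma mem_diff_iff_of_nodup {α : Type*} [DecidableEq α] {l : List α} (hl : l.Nodup)
    (m : List α) (a : α) : a ∈ l.diff m ↔ a ∈ l ∧ a ∉ m := by
  induction m generalizing l with
  | nil => simp
  | cons b m ih =>
    rw [List.diff_cons, ih (hl.erase b), List.Nodup.mem_erase_iff hl, List.mem_cons]
    tauto

/-- key splitting identity. -/
lemma split {l : List (Fin n)} (hl : l.Nodup) (s : S) :
    bigjoin ((subl l).map fun m => ldiff x (lwedge x s m) (l.diff m)) = s := by
  induction l generalizing s with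
  | nil =>
    show (s ⋎ SBA.zero) = s
    exact SBA.vee_zero s
  | cons k l ih =>
    have hkl : k ∉ l := (List.nodup_cons.mp hl).1
    have hln : l.Nodup := (List.nodup_cons.mp hl).2
    simp only [subl, List.map_append, List.map_map]
    rw [bigjoin_append]
    have e1 : ((subl l).map fun m => ldiff x (lwedge x s m) ((k :: l).diff m)) =
        ((subl l).map fun m => ldiff x (lwedge x (s ∖ x k) m) (l.diff m)) := by
      apply List.map_congr_left
      intro m hm
      have hkm : k ∉ m := not_mem_of_mem_subl hm hkl
      rw [List.cons_diff_of_not_mem hkm]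
      show ldiff x ((lwedge x s m) ∖ x k) (l.diff m) = _
      rw [diff_lwedge]
    have e2 : ((subl l).map ((fun m => ldiff x (lwedge x s m) ((k :: l).diff m)) ∘
        (k :: ·))) = ((subl l).map fun m => ldiff x (lwedge x (s ⋏ x k) m) (l.diff m)) := by
      apply List.map_congr_left
      intro m hm
      show ldiff x (lwedge x s (k :: m)) ((k :: l).diff (k :: m)) = _
      rw [List.diff_cons, List.erase_cons_head]
      rfl
    rw [e1, e2, ih hln, ih hln]
    rw [orth_vee_comm (a := s ∖ x k) (b := s ⋏ x k) (diff_wedge_zero' s (x k))]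
    exact diff_decomp s (x k)

end Split
section MainDecomp

open SBA

variable {S : Type u} [SBA S] [LeftHanded S] {n : ℕ}

variable (x : Fin n → S)

noncomputable def phi (i : Fin n) : Finset (Fin n) → S :=
  fun A => if i ∈ A then eA x A i else SBA.zero

lemma phi_orth (i j : Fin n) {A B : Finset (Fin n)} (hAB : A ≠ B) :
    phi x i A ⋏ phi x j B = SBA.zero := by
  unfold phi
  by_cases h1 : i ∈ A <;> by_cases h2 : j ∈ B <;>
    simp only [h1, h2, if_true, if_false, SBA.zero_wedge, SBA.wedge_zero]
  exact eA_wedge_eA_of_ne x hAB i j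

lemma main_decomp (i : Fin n) :
    bigjoin (((Finset.univ : Finset (Finset (Fin n))).toList).map (phi x i)) = x i := by
  classical
  set l : List (Fin n) := ((Finset.univ.erase i)).sort (· ≤ ·) with hldef
  have hl : l.Nodup := Finset.sort_nodup _ _
  have hmeml : ∀ k, k ∈ l ↔ k ≠ i := by
    intro k
    rw [hldef, Finset.mem_sort, Finset.mem_erase]
    simp
  have hil : i ∉ l := fun h => (hmeml i).mp h rfl
  -- pointwise identification of split leaves with eA
  have hpoint : ∀ m ∈ subl l,
      ldiff x (lwedge x (x i) m) (l.diff m) = phi x i (insert i m.toFinset) := by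
    intro m hm
    have hmsub : m.Sublist l := sublist_of_mem_subl hm
    have hmnd : m.Nodup := hmsub.nodup hl
    have him : i ∉ m := not_mem_of_mem_subl hm hil
    have hiA : i ∈ insert i m.toFinset := Finset.mem_insert_self i _
    rw [phi, if_pos hiA]
    -- wedge part
    have hw : wA x (insert i m.toFinset) i = lwedge x (x i) m := by
      have hperm : ((insert i m.toFinset).sort (· ≤ ·)).Perm (i :: m) := by
        apply (List.perm_ext_iff_of_nodup (Finset.sort_nodup _ _) ?_).mpr
        · intro a
          rw [Finset.mem_sort, Finset.mem_insert, List.mem_cons, List.mem_toFinset]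
        · exact List.nodup_cons.mpr ⟨him, hmnd⟩
      rw [wA, lwedge_perm x hperm, lwedge_cons, wedge_idem]
    -- diff part
    have hd : ((insert i m.toFinset)ᶜ.sort (· ≤ ·)).Perm (l.diff m) := by
      apply (List.perm_ext_iff_of_nodup (Finset.sort_nodup _ _)
        ((List.diff_sublist l m).nodup hl)).mpr
      intro a
      rw [Finset.mem_sort, Finset.mem_compl, Finset.mem_insert, List.mem_toFinset]
      rw [mem_diff_iff_of_nodup hl m a, hmeml a]
      push_neg
      tauto
    rw [eA, hw, ldiff_perm x hd]
  have hsplit := split x hl (x i)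
  rw [List.map_congr_left hpoint] at hsplit
  rw [← hsplit]
  have : ((subl l).map fun m => phi x i (insert i m.toFinset)) =
      ((subl l).map fun m => insert i m.toFinset).map (phi x i) := by
    rw [List.map_map]; rfl
  rw [this]
  symm
  apply bigjoin_map_eq_of (phi x i)
  · -- L1 nodup
    apply List.Nodup.map_on ?_ (subl_nodup hl)
    intro m₁ hm₁ m₂ hm₂ heq
    have hi₁ : i ∉ m₁ := not_mem_of_mem_subl hm₁ hil
    have hi₂ : i ∉ m₂ := not_mem_of_mem_subl hm₂ hil
    apply sublist_eq_of_mem_iff hl (sublist_of_mem_subl hm₁) (sublist_of_mem_subl hm₂)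
    intro a
    constructor <;> intro ha
    · have : a ∈ insert i m₂.toFinset := heq ▸ (Finset.mem_insert_of_mem
        (List.mem_toFinset.mpr ha))
      rcases Finset.mem_insert.mp this with h | h
      · exact absurd (h ▸ ha) hi₁
      · exact List.mem_toFinset.mp h
    · have : a ∈ insert i m₁.toFinset := heq ▸ (Finset.mem_insert_of_mem
        (List.mem_toFinset.mpr ha))
      rcases Finset.mem_insert.mp this with h | h
      · exact absurd (h ▸ ha) hi₂
      · exact List.mem_toFinset.mp h
  · exact Finset.nodup_toList _
  · intro A B hAB
    exact phi_orth x i i hAB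
  · intro A _
    exact Finset.mem_toList.mpr (Finset.mem_univ _)
  · -- zero outside
    intro A _ hA
    by_cases hiA : i ∈ A
    · exfalso
      apply hA
      rw [List.mem_map]
      refine ⟨l.filter (· ∈ A), mem_subl_of_sublist List.filter_sublist, ?_⟩
      ext a
      simp only [Finset.mem_insert, List.mem_toFinset, List.mem_filter, decide_eq_true_eq]
      constructor
      · rintro (rfl | ⟨_, h⟩)
        · exact hiA
        · exact h
      · intro haA
        by_cases hai : a = i
        · exact Or.inl hai
        · exact Or.inr ⟨(hmeml a).mpr hai, haA⟩
    · rw [phi, if_neg hiA]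

end MainDecomp
section Model

open SBA

instance optionSBA (α : Type v) : SBA (Option α) where
  wedge a b := match b with | none => none | some _ => a
  vee a b := match b with | none => a | some _ => b
  diff a b := match b with | none => a | some _ => none
  zero := none
  wedge_assoc := by intro a b c; cases a <;> cases b <;> cases c <;> rfl
  vee_assoc := by intro a b c; cases a <;> cases b <;> cases c <;> rfl
  absorb1 := by intro a b; cases a <;> cases b <;> rfl
  absorb2 := by intro a b; cases a <;> cases b <;> rfl
  absorb3 := by intro a b; cases a <;> cases b <;> rfl
  absorb4 := by intro a b; cases a <;> cases b <;> rfl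
  sdistrib1 := by intro a b c; cases a <;> cases b <;> cases c <;> rfl
  sdistrib2 := by intro a b c; cases a <;> cases b <;> cases c <;> rfl
  zero_wedge := by intro a; cases a <;> rfl
  wedge_zero := by intro a; cases a <;> rfl
  zero_vee := by intro a; cases a <;> rfl
  vee_zero := by intro a; cases a <;> rfl
  diff_ax1 := by intro a b; cases a <;> cases b <;> rfl
  diff_ax2 := by intro a b; cases a <;> cases b <;> rfl
  diff_ax3 := by intro a b; cases a <;> cases b <;> rfl

instance optionLeftHanded (α : Type v) : LeftHanded (Option α) where
  lh_wedge := by intro a b; cases a <;> cases b <;> rfl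
  lh_vee := by intro a b; cases a <;> cases b <;> rfl

instance piSBA {ι : Type v} (P : ι → Type w) [∀ A, SBA (P A)] : SBA (∀ A, P A) where
  wedge f g := fun A => f A ⋏ g A
  vee f g := fun A => f A ⋎ g A
  diff f g := fun A => f A ∖ g A
  zero := fun _ => SBA.zero
  wedge_assoc := by intro a b c; funext A; exact SBA.wedge_assoc ..
  vee_assoc := by intro a b c; funext A; exact SBA.vee_assoc ..
  absorb1 := by intro a b; funext A; exact SBA.absorb1 ..
  absorb2 := by intro a b; funext A; exact SBA.absorb2 ..
  absorb3 := by intro a b; funext A; exact SBA.absorb3 ..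
  absorb4 := by intro a b; funext A; exact SBA.absorb4 ..
  sdistrib1 := by intro a b c; funext A; exact SBA.sdistrib1 ..
  sdistrib2 := by intro a b c; funext A; exact SBA.sdistrib2 ..
  zero_wedge := by intro a; funext A; exact SBA.zero_wedge ..
  wedge_zero := by intro a; funext A; exact SBA.wedge_zero ..
  zero_vee := by intro a; funext A; exact SBA.zero_vee ..
  vee_zero := by intro a; funext A; exact SBA.vee_zero ..
  diff_ax1 := by intro a b; funext A; exact SBA.diff_ax1 ..
  diff_ax2 := by intro a b; funext A; exact SBA.diff_ax2 ..
  diff_ax3 := by intro a b; funext A; exact SBA.diff_ax3 ..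

instance piLeftHanded {ι : Type v} (P : ι → Type w) [∀ A, SBA (P A)]
    [∀ A, LeftHanded (P A)] : LeftHanded (∀ A, P A) where
  lh_wedge := by intro a b; funext A; exact LeftHanded.lh_wedge ..
  lh_vee := by intro a b; funext A; exact LeftHanded.lh_vee ..

variable (n : ℕ)

/-- index type : nonempty subsets of `Fin n`. -/
abbrev En := {A : Finset (Fin n) // A.Nonempty}

/-- the model: the free left-handed SBA on `n` generators. -/
def FF : Type u := (A : En n) → Option (ULift.{u} {i : Fin n // i ∈ A.1})

instance : SBA (FF.{u} n) := piSBA _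
instance : LeftHanded (FF.{u} n) := piLeftHanded _

/-- the generators of the model. -/
def XX (i : Fin n) : FF.{u} n :=
  fun A => if h : i ∈ A.1 then some ⟨⟨i, h⟩⟩ else none

/-- the atoms of the model. -/
def atomF {A : Finset (Fin n)} {j : Fin n} (hj : j ∈ A) : FF.{u} n :=
  fun B => if h : B.1 = A then some ⟨⟨j, h ▸ hj⟩⟩ else none

lemma FF_wedge_apply (f g : FF.{u} n) (B : En n) : (f ⋏ g) B = f B ⋏ g B := rfl

lemma FF_vee_apply (f g : FF.{u} n) (B : En n) : (f ⋎ g) B = f B ⋎ g B := rfl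

lemma FF_diff_apply (f g : FF.{u} n) (B : En n) : (f ∖ g) B = f B ∖ g B := rfl

lemma FF_zero_apply (B : En n) : (SBA.zero : FF.{u} n) B = none := rfl

lemma opt_wedge_some {α : Type v} (a : Option α) (v : α) : a ⋏ some v = a := by
  cases a <;> rfl

lemma opt_wedge_none {α : Type v} (a : Option α) : a ⋏ (none : Option α) = none := by
  cases a <;> rfl

lemma opt_vee_some {α : Type v} (a : Option α) (v : α) : a ⋎ some v = some v := by
  cases a <;> rfl

lemma opt_vee_none {α : Type v} (a : Option α) : a ⋎ (none : Option α) = a := by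
  cases a <;> rfl

lemma opt_diff_some {α : Type v} (a : Option α) (v : α) : a ∖ some v = none := by
  cases a <;> rfl

lemma opt_diff_none {α : Type v} (a : Option α) : a ∖ (none : Option α) = a := by
  cases a <;> rfl

lemma opt_zero {α : Type v} : (SBA.zero : Option α) = none := rfl

instance : Fintype (FF.{u} n) := by unfold FF; infer_instance

end Model
section Hmap

open SBA

variable {S : Type u} [SBA S] [LeftHanded S] {n : ℕ} (x : Fin n → S)

noncomputable def GG (g : FF.{u} n) : Finset (Fin n) → S :=
  fun A => if hA : A.Nonempty then
    (match g ⟨A, hA⟩ with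
     | none => SBA.zero
     | some v => eA x A v.down.1)
    else SBA.zero

noncomputable def hmap (g : FF.{u} n) : S :=
  bigjoin (((Finset.univ : Finset (Finset (Fin n)))).toList.map (GG x g))

lemma GG_cases (g : FF.{u} n) (A : Finset (Fin n)) :
    GG x g A = SBA.zero ∨ ∃ j, j ∈ A ∧ GG x g A = eA x A j := by
  unfold GG
  by_cases hA : A.Nonempty
  · rw [dif_pos hA]
    cases hg : g ⟨A, hA⟩ with
    | none => exact Or.inl rfl
    | some v => exact Or.inr ⟨v.down.1, v.down.2, rfl⟩
  · rw [dif_neg hA]; exact Or.inl rfl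

lemma GG_orth (g g' : FF.{u} n) {A B : Finset (Fin n)} (hAB : A ≠ B) :
    GG x g A ⋏ GG x g' B = SBA.zero := by
  rcases GG_cases x g A with h1 | ⟨j, hj, h1⟩ <;>
    rcases GG_cases x g' B with h2 | ⟨k, hk, h2⟩ <;> rw [h1, h2]
  · exact SBA.zero_wedge _
  · exact SBA.zero_wedge _
  · exact SBA.wedge_zero _
  · exact eA_wedge_eA_of_ne x hAB j k

lemma GG_wedge (g g' : FF.{u} n) (A : Finset (Fin n)) :
    GG x (g ⋏ g') A = GG x g A ⋏ GG x g' A := by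
  unfold GG
  by_cases hA : A.Nonempty
  · simp only [dif_pos hA, FF_wedge_apply]
    cases h1 : g ⟨A, hA⟩ with
    | none =>
      cases h2 : g' ⟨A, hA⟩ with
      | none => rw [opt_wedge_none]; exact (SBA.zero_wedge _).symm
      | some w => rw [opt_wedge_some]; exact (SBA.zero_wedge _).symm
    | some v =>
      cases h2 : g' ⟨A, hA⟩ with
      | none => rw [opt_wedge_none]; exact (SBA.wedge_zero _).symm
      | some w =>
        rw [opt_wedge_some]
        exact (eA_wedge_eA_same x (Or.inl w.down.2)).symm
  · simp only [dif_neg hA]; exact (SBA.zero_wedge _).symm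

lemma GG_vee (g g' : FF.{u} n) (A : Finset (Fin n)) :
    GG x (g ⋎ g') A = GG x g A ⋎ GG x g' A := by
  unfold GG
  by_cases hA : A.Nonempty
  · simp only [dif_pos hA, FF_vee_apply]
    cases h1 : g ⟨A, hA⟩ with
    | none =>
      cases h2 : g' ⟨A, hA⟩ with
      | none => rw [opt_vee_none]; exact (SBA.zero_vee _).symm
      | some w => rw [opt_vee_some]; exact (SBA.zero_vee _).symm
    | some v =>
      cases h2 : g' ⟨A, hA⟩ with
      | none => rw [opt_vee_none]; exact (SBA.vee_zero _).symm
      | some w =>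
        rw [opt_vee_some]
        exact (eA_vee_eA_same x (Or.inl w.down.2) (Or.inl v.down.2)).symm
  · simp only [dif_neg hA]; exact (SBA.zero_vee _).symm

lemma GG_diff (g g' : FF.{u} n) (A : Finset (Fin n)) :
    GG x (g ∖ g') A = GG x g A ∖ GG x g' A := by
  unfold GG
  by_cases hA : A.Nonempty
  · simp only [dif_pos hA, FF_diff_apply]
    cases h1 : g ⟨A, hA⟩ with
    | none =>
      cases h2 : g' ⟨A, hA⟩ with
      | none => rw [opt_diff_none]; exact (zero_diff _).symm
      | some w => rw [opt_diff_some]; exact (zero_diff _).symm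
    | some v =>
      cases h2 : g' ⟨A, hA⟩ with
      | none => rw [opt_diff_none]; exact (diff_zero_right _).symm
      | some w =>
        rw [opt_diff_some]
        exact (eA_diff_eA_same x (Or.inl w.down.2)).symm
  · simp only [dif_neg hA]; exact (zero_diff _).symm

lemma hmap_isHom : IsHom (hmap x : FF.{u} n → S) := by
  have hnd := Finset.nodup_toList (Finset.univ : Finset (Finset (Fin n)))
  refine ⟨?_, ?_, ?_, ?_⟩
  · intro g g'
    unfold hmap
    rw [List.map_congr_left (fun A _ => GG_wedge x g g' A)]
    exact (bigjoin_map_wedge _ hnd _ _ (fun A B h => GG_orth x g g' h)).symm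
  · intro g g'
    unfold hmap
    rw [List.map_congr_left (fun A _ => GG_vee x g g' A)]
    exact (bigjoin_map_vee _ hnd _ _ (fun A B h => GG_orth x g' g h)).symm
  · intro g g'
    unfold hmap
    rw [List.map_congr_left (fun A _ => GG_diff x g g' A)]
    exact (bigjoin_map_diff _ hnd _ _
      (fun A B h => ⟨GG_orth x g g h, GG_orth x g g' h⟩)).symm
  · unfold hmap
    apply bigjoin_eq_zero
    intro u hu
    obtain ⟨A, _, rfl⟩ := List.mem_map.mp hu
    unfold GG
    by_cases hA : A.Nonempty
    · rw [dif_pos hA]; rfl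
    · rw [dif_neg hA]

lemma GG_XX (i : Fin n) (A : Finset (Fin n)) : GG x (XX n i) A = phi x i A := by
  unfold GG phi XX
  by_cases hA : A.Nonempty
  · rw [dif_pos hA]
    by_cases hiA : i ∈ A
    · rw [dif_pos hiA, if_pos hiA]
    · rw [dif_neg hiA, if_neg hiA]
  · rw [dif_neg hA, if_neg (fun hiA => hA ⟨i, hiA⟩)]

lemma hmap_XX (i : Fin n) : hmap x (XX n i : FF.{u} n) = x i := by
  unfold hmap
  rw [List.map_congr_left (fun A _ => GG_XX x i A)]
  exact main_decomp x i

end Hmap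
section ModelComp

open SBA

variable {n : ℕ}

lemma opt_none_wedge {α : Type v} (b : Option α) : (none : Option α) ⋏ b = none := by
  cases b <;> rfl

lemma opt_none_diff {α : Type v} (b : Option α) : (none : Option α) ∖ b = none := by
  cases b <;> rfl

lemma XX_apply_pos {i : Fin n} {B : En n} (h : i ∈ B.1) :
    XX.{u} n i B = some ⟨⟨i, h⟩⟩ := dif_pos h

lemma XX_apply_neg {i : Fin n} {B : En n} (h : i ∉ B.1) : XX.{u} n i B = none := dif_neg h

lemma lwedge_XX_none {m : List (Fin n)} {s : FF.{u} n} {B : En n} (hs : s B = none) :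
    lwedge (XX.{u} n) s m B = none := by
  induction m generalizing s with
  | nil => exact hs
  | cons k m ih =>
    apply ih
    show (s ⋏ XX.{u} n k) B = none
    rw [FF_wedge_apply, hs]
    exact opt_none_wedge _

lemma lwedge_XX_all {m : List (Fin n)} {s : FF.{u} n} {B : En n}
    (h : ∀ k ∈ m, k ∈ B.1) : lwedge (XX.{u} n) s m B = s B := by
  induction m generalizing s with
  | nil => rfl
  | cons k m ih =>
    rw [lwedge_cons, ih (fun k' hk' => h k' (by simp [hk']))]
    show (s ⋏ XX.{u} n k) B = s B
    rw [FF_wedge_apply, XX_apply_pos (h k (by simp))]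
    exact opt_wedge_some _ _

lemma lwedge_XX_miss {m : List (Fin n)} {s : FF.{u} n} {B : En n}
    (h : ∃ k ∈ m, k ∉ B.1) : lwedge (XX.{u} n) s m B = none := by
  obtain ⟨k', hk'm, hk'B⟩ := h
  induction m generalizing s with
  | nil => simp at hk'm
  | cons k m ih =>
    rcases List.mem_cons.mp hk'm with rfl | hmem
    · rw [lwedge_cons]
      apply lwedge_XX_none
      show (s ⋏ XX.{u} n k') B = none
      rw [FF_wedge_apply, XX_apply_neg hk'B]
      exact opt_wedge_none _
    · exact ih hmem

lemma ldiff_XX_none {m : List (Fin n)} {s : FF.{u} n} {B : En n} (hs : s B = none) :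
    ldiff (XX.{u} n) s m B = none := by
  induction m generalizing s with
  | nil => exact hs
  | cons k m ih =>
    apply ih
    show (s ∖ XX.{u} n k) B = none
    rw [FF_diff_apply, hs]
    exact opt_none_diff _

lemma ldiff_XX_all {m : List (Fin n)} {s : FF.{u} n} {B : En n}
    (h : ∀ k ∈ m, k ∉ B.1) : ldiff (XX.{u} n) s m B = s B := by
  induction m generalizing s with
  | nil => rfl
  | cons k m ih =>
    rw [ldiff_cons, ih (fun k' hk' => h k' (by simp [hk']))]
    show (s ∖ XX.{u} n k) B = s B
    rw [FF_diff_apply, XX_apply_neg (h k (by simp))]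
    exact opt_diff_none _

lemma ldiff_XX_hit {m : List (Fin n)} {s : FF.{u} n} {B : En n}
    (h : ∃ k ∈ m, k ∈ B.1) : ldiff (XX.{u} n) s m B = none := by
  obtain ⟨k', hk'm, hk'B⟩ := h
  induction m generalizing s with
  | nil => simp at hk'm
  | cons k m ih =>
    rcases List.mem_cons.mp hk'm with rfl | hmem
    · rw [ldiff_cons]
      apply ldiff_XX_none
      show (s ∖ XX.{u} n k') B = none
      rw [FF_diff_apply, XX_apply_pos hk'B]
      exact opt_diff_some _ _
    · exact ih hmem

lemma eA_XX {A : Finset (Fin n)} {j : Fin n} (hj : j ∈ A) :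
    eA (XX.{u} n) A j = atomF n hj := by
  funext B
  show eA (XX.{u} n) A j B = (if h : B.1 = A then some ⟨⟨j, h ▸ hj⟩⟩ else none)
  by_cases hBA : B.1 = A
  · rw [dif_pos hBA, eA]
    rw [ldiff_XX_all (fun k hk =>
      by rw [hBA]; exact Finset.mem_compl.mp ((Finset.mem_sort _).mp hk))]
    rw [wA, lwedge_XX_all (fun k hk => by rw [hBA]; exact (Finset.mem_sort _).mp hk)]
    exact XX_apply_pos _
  · rw [dif_neg hBA, eA]
    by_cases hsub : A ⊆ B.1
    · have hss : A ⊂ B.1 := ⟨hsub, fun h => hBA (Finset.Subset.antisymm h hsub)⟩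
      obtain ⟨k, hkB, hkA⟩ := Finset.exists_of_ssubset hss
      apply ldiff_XX_hit
      exact ⟨k, (Finset.mem_sort _).mpr (Finset.mem_compl.mpr hkA), hkB⟩
    · obtain ⟨k, hkA, hkB⟩ := Finset.not_subset.mp hsub
      apply ldiff_XX_none
      rw [wA]
      exact lwedge_XX_miss ⟨k, (Finset.mem_sort _).mpr hkA, hkB⟩

lemma bigjoin_apply {ι : Type v} {P : ι → Type w} [∀ A, SBA (P A)]
    (lst : List (∀ A, P A)) (B : ι) :
    (bigjoin lst) B = bigjoin (lst.map (· B)) := by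
  induction lst with
  | nil => rfl
  | cons v lst ih =>
    show (v ⋎ bigjoin lst) B = v B ⋎ bigjoin (lst.map (· B))
    rw [← ih]
    rfl

end ModelComp

section Single

open SBA

variable {T : Type v} [SBA T] [LeftHanded T]

lemma bigjoin_eq_single {ι : Type w} [DecidableEq ι] {L : List ι} (hnd : L.Nodup)
    (ψ : ι → T) {A₀ : ι} (hA₀ : A₀ ∈ L) (hz : ∀ A ∈ L, A ≠ A₀ → ψ A = SBA.zero) :
    bigjoin (L.map ψ) = ψ A₀ := by
  induction L with
  | nil => simp at hA₀
  | cons B L' ih =>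
    have hnd' : L'.Nodup := (List.nodup_cons.mp hnd).2
    have hB : B ∉ L' := (List.nodup_cons.mp hnd).1
    simp only [List.map_cons, bigjoin_cons]
    by_cases hBA : B = A₀
    · subst hBA
      have : bigjoin (L'.map ψ) = SBA.zero := by
        apply bigjoin_eq_zero
        intro u hu
        obtain ⟨A, hA, rfl⟩ := List.mem_map.mp hu
        exact hz A (by simp [hA]) (fun h => hB (h ▸ hA))
      rw [this, SBA.vee_zero]
    · have hA₀' : A₀ ∈ L' := by
        rcases List.mem_cons.mp hA₀ with h | h
        · exact absurd h.symm hBA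
        · exact h
      rw [hz B (by simp) hBA, SBA.zero_vee]
      exact ih hnd' hA₀' (fun A hA hne => hz A (by simp [hA]) hne)

end Single
section FHom

open SBA

variable {S : Type u} [SBA S] [LeftHanded S] {n : ℕ} (x : Fin n → S)
variable {f : S → FF.{u} n}

lemma f_lwedge (hf : IsHom f) (hfx : ∀ i, f (x i) = XX.{u} n i) (s : S)
    (m : List (Fin n)) : f (lwedge x s m) = lwedge (XX.{u} n) (f s) m := by
  induction m generalizing s with
  | nil => rfl
  | cons k m ih => rw [lwedge_cons, ih, hf.1, hfx, lwedge_cons]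

lemma f_ldiff (hf : IsHom f) (hfx : ∀ i, f (x i) = XX.{u} n i) (s : S)
    (m : List (Fin n)) : f (ldiff x s m) = ldiff (XX.{u} n) (f s) m := by
  induction m generalizing s with
  | nil => rfl
  | cons k m ih => rw [ldiff_cons, ih, hf.2.2.1, hfx, ldiff_cons]

lemma f_eA (hf : IsHom f) (hfx : ∀ i, f (x i) = XX.{u} n i) (A : Finset (Fin n))
    (j : Fin n) : f (eA x A j) = eA (XX.{u} n) A j := by
  rw [eA, f_ldiff x hf hfx, wA, f_lwedge x hf hfx, hfx, eA, wA]

lemma f_bigjoin (hf : IsHom f) (lst : List S) :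
    f (bigjoin lst) = bigjoin (lst.map f) := by
  induction lst with
  | nil => exact hf.2.2.2
  | cons s lst ih => rw [bigjoin_cons, hf.2.1, ih, List.map_cons, bigjoin_cons]

noncomputable def GGF (u : FF.{u} n) : Finset (Fin n) → FF.{u} n :=
  fun A => if hA : A.Nonempty then
    (match u ⟨A, hA⟩ with
     | none => SBA.zero
     | some v => atomF n v.down.2)
    else SBA.zero

lemma f_GG (hf : IsHom f) (hfx : ∀ i, f (x i) = XX.{u} n i) (u : FF.{u} n)
    (A : Finset (Fin n)) : f (GG x u A) = GGF u A := by
  unfold GG GGF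
  by_cases hA : A.Nonempty
  · simp only [dif_pos hA]
    cases h : u ⟨A, hA⟩ with
    | none => exact hf.2.2.2
    | some v => rw [f_eA x hf hfx, eA_XX v.down.2]
  · simp only [dif_neg hA]
    exact hf.2.2.2

lemma GGF_apply_ne {u : FF.{u} n} {A : Finset (Fin n)} {B : En n} (h : A ≠ B.1) :
    GGF u A B = none := by
  unfold GGF
  by_cases hA : A.Nonempty
  · simp only [dif_pos hA]
    cases hu : u ⟨A, hA⟩ with
    | none => rfl
    | some v => exact dif_neg (fun hBA => h hBA.symm)
  · simp only [dif_neg hA]; rfl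

lemma GGF_apply_self (u : FF.{u} n) (B : En n) : GGF u B.1 B = u B := by
  obtain ⟨A, hA⟩ := B
  unfold GGF
  rw [dif_pos hA]
  cases h : u ⟨A, hA⟩ with
  | none => rfl
  | some v =>
    show atomF n v.down.2 ⟨A, hA⟩ = some v
    unfold atomF
    rw [dif_pos rfl]

lemma bigjoin_FF_apply (lst : List (FF.{u} n)) (B : En n) :
    (bigjoin lst) B = bigjoin (lst.map (· B)) := by
  induction lst with
  | nil => rfl
  | cons v l ih =>
    show v B ⋎ (bigjoin l) B = v B ⋎ bigjoin (l.map (· B))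
    rw [ih]

lemma f_hmap (hf : IsHom f) (hfx : ∀ i, f (x i) = XX.{u} n i) (u : FF.{u} n) :
    f (hmap x u) = u := by
  unfold hmap
  rw [f_bigjoin hf, List.map_map]
  have hcomp : (f ∘ GG x u) = fun A => f (GG x u A) := rfl
  rw [hcomp, List.map_congr_left (fun A _ => f_GG x hf hfx u A)]
  funext B
  rw [bigjoin_FF_apply, List.map_map]
  have := bigjoin_eq_single (T := Option (ULift.{u} {i : Fin n // i ∈ B.1.1}))
    (Finset.nodup_toList (Finset.univ : Finset (Finset (Fin n))))
    (fun A => GGF u A B) (Finset.mem_toList.mpr (Finset.mem_univ B.1))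
    (fun A _ hne => GGF_apply_ne hne)
  rw [show ((· B) ∘ GGF u) = fun A => GGF u A B from rfl] at *
  rw [this]
  exact GGF_apply_self u B

end FHom
section AtomsFF

open SBA

variable {n : ℕ}

lemma opt_nle_iff {α : Type v} (a b : Option α) : nle a b ↔ (a = none ∨ a = b) := by
  constructor
  · rintro ⟨h1, h2⟩
    cases ha : a with
    | none => exact Or.inl rfl
    | some v =>
      cases hb : b with
      | none =>
        rw [ha, hb] at h1
        rw [opt_wedge_none] at h1
        exact Or.inl h1.symm
      | some w =>
        rw [ha, hb] at h2
        rw [opt_wedge_some] at h2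
        exact Or.inr h2.symm
  · rintro (rfl | rfl)
    · exact nle_zero b
    · exact nle_refl a

lemma FF_nle_iff (f g : FF.{u} n) : nle f g ↔ ∀ B, f B = none ∨ f B = g B := by
  constructor
  · rintro ⟨h1, h2⟩ B
    have e1 : f B ⋏ g B = f B := by
      have := congrFun h1 B
      rwa [FF_wedge_apply] at this
    have e2 : g B ⋏ f B = f B := by
      have := congrFun h2 B
      rwa [FF_wedge_apply] at this
    exact (opt_nle_iff (f B) (g B)).mp ⟨e1, e2⟩
  · intro h
    have h' : ∀ B, nle (f B) (g B) := fun B => (opt_nle_iff _ _).mpr (h B)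
    constructor
    · funext B; rw [FF_wedge_apply]; exact (h' B).1
    · funext B; rw [FF_wedge_apply]; exact (h' B).2

lemma FF_zero_iff (f : FF.{u} n) : f = SBA.zero ↔ ∀ B, f B = none := by
  constructor
  · rintro rfl B; rfl
  · intro h; funext B; exact h B

lemma atomF_apply_self {A : Finset (Fin n)} {j : Fin n} (hj : j ∈ A) (B : En n)
    (hB : B.1 = A) : atomF.{u} n hj B = some ⟨⟨j, hB ▸ hj⟩⟩ := dif_pos hB

lemma atomF_apply_ne {A : Finset (Fin n)} {j : Fin n} (hj : j ∈ A) (B : En n)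
    (hB : B.1 ≠ A) : atomF.{u} n hj B = none := dif_neg hB

lemma isAtom_atomF {A : Finset (Fin n)} {j : Fin n} (hj : j ∈ A) :
    IsAtom (atomF.{u} n hj) := by
  have hA : A.Nonempty := ⟨j, hj⟩
  set B₀ : En n := ⟨A, hA⟩ with hB₀
  constructor
  · intro h
    have := congrFun h B₀
    rw [atomF_apply_self hj B₀ rfl] at this
    exact Option.some_ne_none _ this
  · intro v hv
    rw [FF_nle_iff] at hv
    by_cases h0 : v B₀ = none
    · left
      rw [FF_zero_iff]
      intro B
      by_cases hB : B.1 = A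
      · have : B = B₀ := Subtype.ext hB
        rw [this]; exact h0
      · rcases hv B with h | h
        · exact h
        · rw [h]; exact atomF_apply_ne hj B hB
    · right
      funext B
      by_cases hB : B.1 = A
      · have hBB : B = B₀ := Subtype.ext hB
        rcases hv B with h | h
        · exfalso; apply h0; rw [← hBB]; exact h
        · exact h
      · rcases hv B with h | h
        · rw [h, atomF_apply_ne hj B hB]
        · exact h

lemma isAtom_FF_iff (v : FF.{u} n) :
    IsAtom v ↔ ∃ (A : Finset (Fin n)) (j : Fin n) (hj : j ∈ A), v = atomF.{u} n hj := by
  constructor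
  · rintro ⟨hne, hmin⟩
    have : ∃ B, v B ≠ none := by
      by_contra hc
      push_neg at hc
      exact hne ((FF_zero_iff v).mpr hc)
    obtain ⟨B₀, hB₀⟩ := this
    cases h0 : v B₀ with
    | none => exact absurd h0 hB₀
    | some w =>
      refine ⟨B₀.1, w.down.1, w.down.2, ?_⟩
      have hle : nle (atomF.{u} n w.down.2) v := by
        rw [FF_nle_iff]
        intro B
        by_cases hB : B.1 = B₀.1
        · right
          have : B = B₀ := Subtype.ext hB
          subst this
          rw [atomF_apply_self _ _ rfl, h0]
        · left; exact atomF_apply_ne _ _ hB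
      rcases hmin _ hle with h | h
      · exfalso
        have := congrFun h B₀
        rw [atomF_apply_self _ _ rfl] at this
        exact Option.some_ne_none _ this
      · exact h.symm
  · rintro ⟨A, j, hj, rfl⟩
    exact isAtom_atomF hj

def TT (n : ℕ) := (A : En n) × {i : Fin n // i ∈ A.1}

instance : Fintype (TT n) := by unfold TT En; infer_instance

noncomputable def theta (p : TT n) : FF.{u} n := atomF n p.2.2

lemma theta_inj : Function.Injective (theta : TT n → FF.{u} n) := by
  rintro ⟨⟨A, hA⟩, ⟨j, hj⟩⟩ ⟨⟨A', hA'⟩, ⟨j', hj'⟩⟩ h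
  have h1 := congrFun h ⟨A, hA⟩
  rw [show theta (⟨⟨A, hA⟩, ⟨j, hj⟩⟩ : TT n) ⟨A, hA⟩ = some ⟨⟨j, hj⟩⟩ from
    atomF_apply_self hj _ rfl] at h1
  by_cases hAA : A = A'
  · subst hAA
    rw [show theta (⟨⟨A, hA'⟩, ⟨j', hj'⟩⟩ : TT n) ⟨A, hA⟩ = some ⟨⟨j', hj'⟩⟩ from
      atomF_apply_self hj' _ rfl] at h1
    have : j = j' := by
      have := Option.some.inj h1
      exact congrArg (fun z => z.down.1) this
    subst this
    rfl
  · rw [show theta (⟨⟨A', hA'⟩, ⟨j', hj'⟩⟩ : TT n) ⟨A, hA⟩ = none from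
      atomF_apply_ne hj' _ hAA] at h1
    exact absurd h1 (Option.some_ne_none _)

lemma atoms_FF_eq_range :
    {v : FF.{u} n | IsAtom v} = Set.range (theta : TT n → FF.{u} n) := by
  ext v
  simp only [Set.mem_setOf_eq, Set.mem_range, isAtom_FF_iff]
  constructor
  · rintro ⟨A, j, hj, rfl⟩
    exact ⟨⟨⟨A, ⟨j, hj⟩⟩, ⟨j, hj⟩⟩, rfl⟩
  · rintro ⟨⟨⟨A, hA⟩, ⟨j, hj⟩⟩, rfl⟩
    exact ⟨A, j, hj, rfl⟩

lemma sum_card_univ_finset :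
    ∑ A : Finset (Fin n), A.card = n * 2 ^ (n - 1) := by
  have h1 : ∀ A : Finset (Fin n), A.card = ∑ i : Fin n, if i ∈ A then 1 else 0 := by
    intro A
    rw [Finset.sum_ite_mem, Finset.univ_inter, Finset.card_eq_sum_ones]
  have h2 : ∀ i : Fin n,
      (Finset.univ.filter (fun A : Finset (Fin n) => i ∈ A)).card = 2 ^ (n - 1) := by
    intro i
    have himg : Finset.univ.filter (fun A : Finset (Fin n) => i ∈ A)
        = ((Finset.univ.erase i).powerset).image (insert i) := by
      ext A
      simp only [Finset.mem_filter, Finset.mem_univ, true_and, Finset.mem_image,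
        Finset.mem_powerset]
      constructor
      · intro hiA
        refine ⟨A.erase i, ?_, Finset.insert_erase hiA⟩
        exact Finset.erase_subset_erase i (Finset.subset_univ A)
      · rintro ⟨C, _, rfl⟩
        exact Finset.mem_insert_self i C
    rw [himg, Finset.card_image_of_injOn, Finset.card_powerset,
      Finset.card_erase_of_mem (Finset.mem_univ i), Finset.card_univ, Fintype.card_fin]
    intro C hC D hD hCD
    simp only [Finset.coe_powerset, Set.mem_preimage, Finset.coe_univ,
      Set.mem_powerset_iff] at hC hD
    have hiC : i ∉ C := fun h => (Finset.mem_erase.mp (hC (by simpa using h))).1 rfl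
    have hiD : i ∉ D := fun h => (Finset.mem_erase.mp (hD (by simpa using h))).1 rfl
    rw [← Finset.erase_insert hiC, ← Finset.erase_insert hiD, hCD]
  calc ∑ A : Finset (Fin n), A.card
      = ∑ A : Finset (Fin n), ∑ i : Fin n, (if i ∈ A then 1 else 0) := by
        apply Finset.sum_congr rfl
        intro A _
        exact h1 A
  _ = ∑ i : Fin n, ∑ A : Finset (Fin n), (if i ∈ A then 1 else 0) := Finset.sum_comm
  _ = ∑ i : Fin n, (Finset.univ.filter (fun A : Finset (Fin n) => i ∈ A)).card := by
        apply Finset.sum_congr rfl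
        intro i _
        rw [Finset.card_filter]
  _ = ∑ _i : Fin n, 2 ^ (n - 1) := by
        apply Finset.sum_congr rfl
        intro i _
        exact h2 i
  _ = n * 2 ^ (n - 1) := by
        rw [Finset.sum_const, Finset.card_univ, Fintype.card_fin, smul_eq_mul]

lemma card_TT : Fintype.card (TT n) = n * 2 ^ (n - 1) := by
  rw [show Fintype.card (TT n) = ∑ A : En n, Fintype.card {i : Fin n // i ∈ A.1} from
    Fintype.card_sigma]
  have h1 : ∀ A : En n, Fintype.card {i : Fin n // i ∈ A.1} = A.1.card := by
    intro A
    exact Fintype.card_coe A.1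
  rw [Finset.sum_congr rfl (fun A _ => h1 A)]
  have h2 : ∑ A : En n, A.1.card
      = ∑ A ∈ (Finset.univ : Finset (Finset (Fin n))).filter Finset.Nonempty, A.card := by
    symm
    apply Finset.sum_subtype
    intro A
    simp
  rw [h2, Finset.sum_filter_of_ne, sum_card_univ_finset]
  intro A _ hne
  exact Finset.card_pos.mp (Nat.pos_of_ne_zero hne)

lemma ncard_atoms_FF : {v : FF.{u} n | IsAtom v}.ncard = n * 2 ^ (n - 1) := by
  rw [atoms_FF_eq_range, ← Nat.card_coe_set_eq,
    Nat.card_range_of_injective theta_inj, Nat.card_eq_fintype_card, card_TT]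

end AtomsFF
theorem stmt8 (n : ℕ) (hn : 1 ≤ n) (S : Type u) [SBA S] [LeftHanded S]
    (x : Fin n → S) (hinj : Function.Injective x)
    (hfree : LFreelyGenerates S (Set.range x)) :
    {a : S | SBA.IsAtom a}.Finite ∧
      {a : S | SBA.IsAtom a}.ncard = n * 2 ^ (n - 1) := by
  classical
  obtain ⟨f, hf, hfg⟩ := hfree.2 (FF.{u} n)
    (fun y => XX.{u} n (Exists.choose y.2))
  have hfx : ∀ i, f (x i) = XX.{u} n i := by
    intro i
    have hy : x i ∈ Set.range x := ⟨i, rfl⟩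
    have h1 := hfg ⟨x i, hy⟩
    refine h1.trans ?_
    exact congrArg (XX.{u} n) (hinj (Exists.choose_spec hy))
  have hinv1 : ∀ u, f (hmap x u) = u := f_hmap x hf hfx
  have hinv2 : ∀ s, hmap x (f s) = s := by
    have hT := hfree.1 {s | hmap x (f s) = s} ?_ ?_ ?_
    · intro s
      have : s ∈ {s | hmap x (f s) = s} := by rw [hT]; trivial
      exact this
    · rintro y ⟨i, rfl⟩
      show hmap x (f (x i)) = x i
      rw [hfx, hmap_XX]
    · show hmap x (f SBA.zero) = SBA.zero
      rw [hf.2.2.2, (hmap_isHom x).2.2.2]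
    · intro a b ha hb
      refine ⟨?_, ?_, ?_⟩
      · show hmap x (f (a ⋏ b)) = a ⋏ b
        rw [hf.1, (hmap_isHom x).1, ha, hb]
      · show hmap x (f (a ⋎ b)) = a ⋎ b
        rw [hf.2.1, (hmap_isHom x).2.1, ha, hb]
      · show hmap x (f (a ∖ b)) = a ∖ b
        rw [hf.2.2.1, (hmap_isHom x).2.2.1, ha, hb]
  have hfinj : Function.Injective f := fun a b h => by rw [← hinv2 a, h, hinv2 b]
  have hhinj : Function.Injective (hmap x : FF.{u} n → S) :=
    fun u v h => by rw [← hinv1 u, h, hinv1 v]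
  have hnle : ∀ a b : S, nle a b ↔ nle (f a) (f b) := by
    intro a b
    constructor
    · rintro ⟨h1, h2⟩
      exact ⟨by rw [← hf.1, h1], by rw [← hf.1, h2]⟩
    · rintro ⟨h1, h2⟩
      constructor
      · apply hfinj; rw [hf.1, h1]
      · apply hfinj; rw [hf.1, h2]
  have hzero : ∀ a : S, a = SBA.zero ↔ f a = SBA.zero := by
    intro a
    constructor
    · rintro rfl; exact hf.2.2.2
    · intro h; exact hfinj (h.trans hf.2.2.2.symm)
  have hatom : ∀ a : S, IsAtom a ↔ IsAtom (f a) := by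
    intro a
    constructor
    · rintro ⟨h0, hmin⟩
      refine ⟨fun h => h0 ((hzero a).mpr h), ?_⟩
      intro v hv
      have hv' : nle (hmap x v) a := by
        apply (hnle _ _).mpr
        rw [hinv1 v]
        exact hv
      rcases hmin _ hv' with h | h
      · left; rw [← hinv1 v, h, hf.2.2.2]
      · right; rw [← hinv1 v, h]
    · rintro ⟨h0, hmin⟩
      refine ⟨fun h => h0 (by rw [h, hf.2.2.2]), ?_⟩
      intro y hy
      rcases hmin (f y) ((hnle y a).mp hy) with h | h
      · left; exact (hzero y).mpr h
      · right; exact hfinj h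
  have hset : {a : S | IsAtom a} = (hmap x) '' {v : FF.{u} n | IsAtom v} := by
    ext s
    simp only [Set.mem_setOf_eq, Set.mem_image]
    constructor
    · intro hs
      exact ⟨f s, (hatom s).mp hs, hinv2 s⟩
    · rintro ⟨v, hv, rfl⟩
      apply (hatom _).mpr
      rw [hinv1]
      exact hv
  constructor
  · rw [hset]
    exact (Set.toFinite _).image _
  · rw [hset, Set.ncard_image_of_injective _ hhinj, ncard_atoms_FF]
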